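/- arXiv:2210.06850 — 7 statements merged into one kernel-verified Lean document; each statement's English description precedes it below -/
import Mathlib

section
/- Let m, c ∈ ℝ and s > 0 satisfy |m − c| ≤ s. Then the Gaussian measure gaussianReal m s² assigns to the set {y ∈ ℝ : y > c} probability at least 1/(4e√π). (Core of Lemma 3: a Gaussian sample whose mean lies within one standard deviation of a target value exceeds the target with probability at least p = 1/(4e√π).) -/
open MeasureTheory ProbabilityTheory Real

/-- Core of Lemma 3: if the mean `m` of a Gaussian with standard deviation `s > 0`
lies within one standard deviation of a target value `c`, then a sample from this
Gaussian exceeds `c` with probability at least `p = 1/(4e√π)`. -/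
theorem gaussian_exceeds_target_prob
    (m c s : ℝ) (hs : 0 < s) (h : |m - c| ≤ s) :
    ENNReal.ofReal (1 / (4 * Real.exp 1 * Real.sqrt π)) ≤
      gaussianReal m ⟨s ^ 2, sq_nonneg s⟩ {y : ℝ | y > c} := by
  set v : NNReal := ⟨s ^ 2, sq_nonneg s⟩ with hv
  have hv0 : v ≠ 0 := by
    intro h0
    have hcoe : (v : ℝ) = 0 := by rw [h0]; simp
    rw [hv] at hcoe
    change s ^ 2 = 0 at hcoe
    nlinarith
  have habs : |m - c| ≤ s := h
  rw [gaussianReal_apply _ hv0]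
  -- lower bound: restrict to Ioo c (c+s)
  have hsub : Set.Ioo c (c + s) ⊆ {y : ℝ | y > c} := fun x hx => hx.1
  have hstep : ∫⁻ x in Set.Ioo c (c + s), gaussianPDF m v x ≤
      ∫⁻ x in {y : ℝ | y > c}, gaussianPDF m v x :=
    lintegral_mono_set hsub
  refine le_trans ?_ hstep
  -- pointwise lower bound on the density on Ioo c (c+s)
  have hdens : ∀ x ∈ Set.Ioo c (c + s),
      ENNReal.ofReal ((s * Real.sqrt (2 * π))⁻¹ * Real.exp (-2)) ≤ gaussianPDF m v x := by
    intro x hx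
    refine ENNReal.ofReal_le_ofReal ?_
    unfold ProbabilityTheory.gaussianPDFReal
    have hvcoe : (v : ℝ) = s ^ 2 := rfl
    rw [hvcoe]
    have hsq : Real.sqrt (2 * π * s ^ 2) = s * Real.sqrt (2 * π) := by
      rw [Real.sqrt_mul (by positivity), Real.sqrt_sq hs.le, mul_comm]
    rw [hsq]
    refine mul_le_mul_of_nonneg_left ?_ (by positivity)
    · -- exp(-2) ≤ exp(-(x-m)²/(2s²))
      apply Real.exp_le_exp.2
      rw [neg_div, neg_le_neg_iff, div_le_iff₀ (by positivity)]
      -- (x-m)² ≤ 2 * (2 s²) = 4 s²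
      have h1 : |x - m| ≤ 2 * s := by
        have : |x - c| ≤ s := by
          rw [abs_le]
          constructor <;> [linarith [hx.1]; linarith [hx.2]]
        calc |x - m| ≤ |x - c| + |c - m| := abs_sub_le x c m
          _ ≤ s + s := by
              have h' : |c - m| ≤ s := by rwa [abs_sub_comm] at h
              linarith
          _ = 2 * s := by ring
      have h2 : (x - m) ^ 2 ≤ (2 * s) ^ 2 := by
        rw [← sq_abs]
        exact pow_le_pow_left₀ (abs_nonneg _) h1 2
      nlinarith
  calc ENNReal.ofReal (1 / (4 * Real.exp 1 * Real.sqrt π))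
      ≤ ENNReal.ofReal ((s * Real.sqrt (2 * π))⁻¹ * Real.exp (-2)) * volume (Set.Ioo c (c + s)) := by
        rw [Real.volume_Ioo]
        have : c + s - c = s := by ring
        rw [this, ← ENNReal.ofReal_mul (by positivity)]
        apply ENNReal.ofReal_le_ofReal
        have hπ : 0 < π := Real.pi_pos
        have hsqrtπ : 0 < Real.sqrt π := Real.sqrt_pos.2 hπ
        have hsqrt2π : 0 < Real.sqrt (2 * π) := Real.sqrt_pos.2 (by positivity)
        have key : Real.exp 1 * Real.sqrt 2 ≤ 4 := by
          have he : Real.exp 1 < 2.7182818286 := Real.exp_one_lt_d9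
          have h2 : Real.sqrt 2 < 1.4142135624 := by
            rw [show (1.4142135624 : ℝ) = Real.sqrt (1.4142135624 ^ 2) from
              (Real.sqrt_sq (by norm_num)).symm]
            apply Real.sqrt_lt_sqrt (by norm_num)
            norm_num
          nlinarith [Real.exp_pos 1, Real.sqrt_nonneg 2]
        have hA : (s * Real.sqrt (2 * π))⁻¹ * Real.exp (-2) * s
            = Real.exp (-2) / Real.sqrt (2 * π) := by
          field_simp
        rw [hA, div_le_div_iff₀ (by positivity) (by positivity), one_mul]
        have h2π : Real.sqrt (2 * π) = Real.sqrt 2 * Real.sqrt π := Real.sqrt_mul (by norm_num) _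
        have hexp2 : Real.exp (-2) * Real.exp 1 * Real.exp 1 = 1 := by
          rw [← Real.exp_add, ← Real.exp_add]; norm_num
        rw [h2π]
        nlinarith [mul_le_mul_of_nonneg_left key
            (show (0:ℝ) ≤ Real.exp (-2) * Real.exp 1 * Real.sqrt π by positivity), hexp2,
          Real.exp_pos 1, Real.exp_pos (-2), Real.sqrt_nonneg 2, hsqrtπ]
    _ ≤ ∫⁻ x in Set.Ioo c (c + s), gaussianPDF m v x := by
        rw [mul_comm]
        calc volume (Set.Ioo c (c + s)) * ENNReal.ofReal ((s * Real.sqrt (2 * π))⁻¹ * Real.exp (-2))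
            = ∫⁻ _ in Set.Ioo c (c + s),
                ENNReal.ofReal ((s * Real.sqrt (2 * π))⁻¹ * Real.exp (-2)) := by
              rw [setLIntegral_const, mul_comm]
          _ ≤ _ := setLIntegral_mono (measurable_gaussianPDF _ _) hdens
end

section
/- Let m, c ∈ ℝ, s > 0 and ε ≥ 0 satisfy |m − c| ≤ s + ε. Then the Gaussian measure gaussianReal m s² assigns to the set {y ∈ ℝ : y + ε > c} probability at least 1/(4e√π). (Core of Lemma 11: the Thompson-sampling lower bound with an additive approximation slack ε retains the same probability p = 1/(4e√π).) -/
open MeasureTheory ProbabilityTheory Real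

/-- Core of Lemma 11: the Thompson-sampling lower bound with an additive approximation
slack `ε` retains the probability `p = 1/(4e√π)`: if `|m − c| ≤ s + ε` then a sample `y`
from a Gaussian with mean `m` and standard deviation `s > 0` satisfies `y + ε > c`
with probability at least `1/(4e√π)`. -/
theorem gaussian_exceeds_target_prob_slack
    (m c s ε : ℝ) (hs : 0 < s) (hε : 0 ≤ ε) (h : |m - c| ≤ s + ε) :
    ENNReal.ofReal (1 / (4 * Real.exp 1 * Real.sqrt π)) ≤
      gaussianReal m ⟨s ^ 2, sq_nonneg s⟩ {y : ℝ | y + ε > c} := by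
  set v : NNReal := ⟨s ^ 2, sq_nonneg s⟩ with hv
  have hv0 : v ≠ 0 := by
    have hpos : (0:ℝ) < (v : ℝ) := by show (0:ℝ) < s ^ 2; positivity
    exact fun h0 => by simp [h0] at hpos
  have hsub : Set.Ioc (m + s) (m + 2 * s) ⊆ {y : ℝ | y + ε > c} := by
    intro y hy
    have h1 : -(s + ε) ≤ m - c := neg_le_of_abs_le h
    have h2 : m + s < y := hy.1
    simp only [Set.mem_setOf_eq]
    linarith
  have hmono := measure_mono (μ := gaussianReal m v) hsub
  refine le_trans ?_ hmono
  rw [gaussianReal_apply_eq_integral m hv0]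
  set C : ℝ := (Real.sqrt (2 * π * v))⁻¹ * Real.exp (-2) with hC
  have hπ : 0 < π := pi_pos
  have hvs : (v : ℝ) = s ^ 2 := rfl
  have hsqrt : Real.sqrt (2 * π * v) = s * Real.sqrt (2 * π) := by
    rw [hvs, mul_comm (2 * π) (s ^ 2), Real.sqrt_mul (sq_nonneg s),
      Real.sqrt_sq hs.le]
  have hintC : ∫ x in Set.Ioc (m + s) (m + 2 * s), C = C * s := by
    rw [setIntegral_const, Real.volume_real_Ioc_of_le (by linarith), smul_eq_mul]
    ring
  have hle : ∫ x in Set.Ioc (m + s) (m + 2 * s), C ≤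
      ∫ x in Set.Ioc (m + s) (m + 2 * s), gaussianPDFReal m v x := by
    refine setIntegral_mono_on (integrableOn_const (by simp) (by simp))
      ((integrable_gaussianPDFReal m v).integrableOn) measurableSet_Ioc ?_
    intro x hx
    have hx1 : 0 ≤ x - m := by nlinarith [hx.1]
    have hx2 : x - m ≤ 2 * s := by nlinarith [hx.2]
    rw [gaussianPDFReal, hC]
    have harg : (-2 : ℝ) ≤ -(x - m) ^ 2 / (2 * (v : ℝ)) := by
      rw [hvs, le_div_iff₀ (by positivity)]
      nlinarith
    exact mul_le_mul_of_nonneg_left (Real.exp_le_exp.2 harg) (by positivity)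
  have h2π : Real.sqrt (2 * π) = Real.sqrt 2 * Real.sqrt π := Real.sqrt_mul (by norm_num) π
  have hs2 : (0:ℝ) < Real.sqrt 2 := by positivity
  have hsπ : (0:ℝ) < Real.sqrt π := Real.sqrt_pos.2 hπ
  have he : 0 < Real.exp 1 := Real.exp_pos 1
  have key : Real.sqrt 2 * Real.exp 1 ≤ 4 := by
    have h1 : Real.exp 1 < 2.7182818286 := Real.exp_one_lt_d9
    have h2 : Real.sqrt 2 ≤ 1.4143 := by
      rw [show (1.4143:ℝ) = Real.sqrt (1.4143 ^ 2) from (Real.sqrt_sq (by norm_num)).symm]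
      exact Real.sqrt_le_sqrt (by norm_num)
    nlinarith
  have hfinal : 1 / (4 * Real.exp 1 * Real.sqrt π) ≤ C * s := by
    have hexp2 : Real.exp (-2) = (Real.exp 1 * Real.exp 1)⁻¹ := by
      rw [← Real.exp_add, ← Real.exp_neg]; norm_num
    have hCval : C * s = (Real.exp 1 * Real.exp 1)⁻¹ / Real.sqrt (2 * π) := by
      rw [hC, hsqrt, hexp2]
      field_simp
    rw [hCval, h2π, div_le_div_iff₀ (by positivity) (by positivity), one_mul]
    have hrw : (Real.exp 1 * Real.exp 1)⁻¹ * (4 * Real.exp 1 * Real.sqrt π)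
        = 4 * Real.sqrt π / Real.exp 1 := by
      field_simp
    rw [hrw, le_div_iff₀ he]
    nlinarith [mul_nonneg hsπ.le (sub_nonneg.2 key)]
  calc ENNReal.ofReal (1 / (4 * Real.exp 1 * Real.sqrt π))
      ≤ ENNReal.ofReal (C * s) := ENNReal.ofReal_le_ofReal hfinal
    _ ≤ ENNReal.ofReal (∫ x in Set.Ioc (m + s) (m + 2 * s), gaussianPDFReal m v x) :=
        ENNReal.ofReal_le_ofReal (hintC ▸ hle)
end

section
/- Let X be a nonempty finite set, t a positive integer, and (Ω, ℙ) a probability space. For each x ∈ X let Z_x : Ω → ℝ be a random variable whose law is gaussianReal (μ x) ((v x)²), where μ : X → ℝ and v : X → ℝ with v x ≥ 0. Then ℙ( for every x ∈ X, |Z_x − μ x| ≤ √(2·log(|X|·t²)) · v x ) ≥ 1 − 1/t². (The mathematical core of Lemmas 2 and 12: a sampled acquisition function with Gaussian marginals of means μ and standard deviations v concentrates simultaneously at all points of the finite domain, with failure probability at most 1/t²; no independence across x is required.) -/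
open MeasureTheory ProbabilityTheory Real Set
open scoped ENNReal NNReal




lemma tail_integral_le (β : ℝ) (hβ : 0 ≤ β) :
    ∫ x in Set.Ioi β, gaussianPDFReal 0 1 x ≤ Real.exp (-β^2/2) / 2 := by
  have hpdf : ∀ x : ℝ, gaussianPDFReal 0 1 x = (Real.sqrt (2*π))⁻¹ * rexp (-x^2/2) := by
    intro x; simp [gaussianPDFReal]
  simp_rw [hpdf]
  rw [integral_const_mul]
  have hshift : ∫ x in Set.Ioi β, rexp (-x^2/2) = ∫ x in Set.Ioi (0:ℝ), rexp (-(x+β)^2/2) := by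
    have h := (measurePreserving_add_right (volume : Measure ℝ) β).setIntegral_preimage_emb
      (measurableEmbedding_addRight β) (fun y => rexp (-y^2/2)) (Set.Ioi β)
    simpa using h.symm
  have hint0 : IntegrableOn (fun x : ℝ => rexp (-x^2/2)) (Set.Ioi 0) := by
    have : Integrable (fun x : ℝ => rexp (-(2⁻¹ : ℝ) * x^2)) := integrable_exp_neg_mul_sq (by norm_num)
    refine (this.congr ?_).integrableOn
    filter_upwards with x; ring_nf
  have hintβ : IntegrableOn (fun x : ℝ => rexp (-(x+β)^2/2)) (Set.Ioi 0) := by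
    have : Integrable (fun x : ℝ => rexp (-x^2/2)) := by
      have : Integrable (fun x : ℝ => rexp (-(2⁻¹ : ℝ) * x^2)) := integrable_exp_neg_mul_sq (by norm_num)
      refine this.congr ?_
      filter_upwards with x; ring_nf
    exact (this.comp_sub_right (-β)).congr (by filter_upwards with x; rw [sub_neg_eq_add]) |>.integrableOn
  have hmono : ∫ x in Set.Ioi (0:ℝ), rexp (-(x+β)^2/2)
      ≤ ∫ x in Set.Ioi (0:ℝ), rexp (-β^2/2) * rexp (-x^2/2) := by
    refine setIntegral_mono_on hintβ (hint0.const_mul _) measurableSet_Ioi ?_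
    intro x hx
    rw [← Real.exp_add]
    apply Real.exp_le_exp.2
    nlinarith [le_of_lt (Set.mem_Ioi.mp hx)]
  have hval : ∫ x in Set.Ioi (0:ℝ), rexp (-β^2/2) * rexp (-x^2/2)
      = rexp (-β^2/2) * (Real.sqrt (2*π) / 2) := by
    rw [integral_const_mul]
    congr 1
    have h := integral_gaussian_Ioi (2⁻¹ : ℝ)
    have : ∫ x in Set.Ioi (0:ℝ), rexp (-x^2/2) = ∫ x in Set.Ioi (0:ℝ), rexp (-(2⁻¹:ℝ) * x^2) := by
      congr 1; ext x; ring_nf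
    rw [this, h]; norm_num [mul_comm]
  calc (Real.sqrt (2*π))⁻¹ * ∫ x in Set.Ioi β, rexp (-x^2/2)
      ≤ (Real.sqrt (2*π))⁻¹ * (rexp (-β^2/2) * (Real.sqrt (2*π) / 2)) := by
        apply mul_le_mul_of_nonneg_left _ (by positivity)
        rw [hshift]; exact hmono.trans hval.le
    _ = rexp (-β^2/2) / 2 := by
        have h2π : Real.sqrt (2*π) ≠ 0 := by positivity
        field_simp

lemma std_gauss_tail (β : ℝ) (hβ : 0 ≤ β) :
    gaussianReal 0 1 {y : ℝ | β < |y|} ≤ ENNReal.ofReal (rexp (-β^2/2)) := by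
  have hset : {y : ℝ | β < |y|} = Set.Iio (-β) ∪ Set.Ioi β := by
    ext y; simp [lt_abs, lt_neg, or_comm]
  have hneg : (gaussianReal 0 1).map (fun y : ℝ => -y) = gaussianReal 0 1 := by
    have h := gaussianReal_map_const_mul (μ := 0) (v := 1) (-1)
    simp only [neg_one_mul, mul_zero] at h
    have hv : NNReal.mk ((-1:ℝ)^2) (sq_nonneg _) * 1 = 1 := by
      rw [mul_one]; ext; norm_num
    rw [hv] at h
    exact h
  have hIoi : gaussianReal 0 1 (Set.Ioi β) ≤ ENNReal.ofReal (rexp (-β^2/2) / 2) := by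
    rw [gaussianReal_apply_eq_integral 0 one_ne_zero]
    exact ENNReal.ofReal_le_ofReal (tail_integral_le β hβ)
  have hIio : gaussianReal 0 1 (Set.Iio (-β)) = gaussianReal 0 1 (Set.Ioi β) := by
    conv_lhs => rw [← hneg]
    rw [Measure.map_apply measurable_neg measurableSet_Iio]
    congr 1
    ext y; simp [neg_lt_neg_iff]
  calc gaussianReal 0 1 {y : ℝ | β < |y|}
      ≤ gaussianReal 0 1 (Set.Iio (-β)) + gaussianReal 0 1 (Set.Ioi β) := by
        rw [hset]; exact measure_union_le _ _
    _ ≤ ENNReal.ofReal (rexp (-β^2/2) / 2) + ENNReal.ofReal (rexp (-β^2/2) / 2) := by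
        rw [hIio]; exact add_le_add hIoi hIoi
    _ = ENNReal.ofReal (rexp (-β^2/2)) := by
        rw [← ENNReal.ofReal_add (by positivity) (by positivity)]; ring_nf

lemma gauss_tail (m σ β : ℝ) (hσ : 0 ≤ σ) (hβ : 0 ≤ β) :
    gaussianReal m ⟨σ^2, sq_nonneg σ⟩ {y : ℝ | β * σ < |y - m|} ≤
      ENNReal.ofReal (rexp (-β^2/2)) := by
  have hs : MeasurableSet {y : ℝ | β * σ < |y - m|} := by
    apply measurableSet_lt measurable_const
    exact (measurable_id.sub_const m).abs
  rcases eq_or_lt_of_le hσ with h0 | h0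
  · have hv0 : (⟨σ^2, sq_nonneg σ⟩ : NNReal) = 0 := by ext; simp [← h0]
    rw [show gaussianReal m ⟨σ^2, sq_nonneg σ⟩ = Measure.dirac m by rw [← gaussianReal_zero_var]; exact congrArg _ hv0, Measure.dirac_apply' _ hs]
    have : m ∉ {y : ℝ | β * σ < |y - m|} := by simp [← h0]
    simp [Set.indicator_of_notMem this]
  · have hmap : gaussianReal m ⟨σ^2, sq_nonneg σ⟩
        = (gaussianReal 0 1).map (fun y => σ * y + m) := by
      have h1 := gaussianReal_map_const_mul (μ := 0) (v := 1) σ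
      have h2 := gaussianReal_map_add_const (μ := σ * 0) (v := NNReal.mk (σ^2) (sq_nonneg σ) * 1) m
      rw [← h1, Measure.map_map (measurable_add_const m) (measurable_const_mul σ)] at h2
      have h3 : gaussianReal (σ * 0 + m) (NNReal.mk (σ^2) (sq_nonneg σ) * 1)
          = gaussianReal m ⟨σ^2, sq_nonneg σ⟩ := by rw [mul_one]; norm_num; rfl
      rw [h3] at h2
      exact h2.symm
    rw [hmap, Measure.map_apply (by fun_prop) hs]
    have hpre : (fun y => σ * y + m) ⁻¹' {y : ℝ | β * σ < |y - m|} = {y : ℝ | β < |y|} := by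
      ext y
      simp only [Set.mem_preimage, Set.mem_setOf_eq, add_sub_cancel_right, abs_mul,
        abs_of_pos h0, mul_comm σ]
      exact ⟨fun h => lt_of_mul_lt_mul_right h h0.le, fun h => mul_lt_mul_of_pos_right h h0⟩
    rw [hpre]
    exact std_gauss_tail β hβ
/-- Mathematical core of Lemmas 2 and 12: a sampled acquisition function with
Gaussian marginals of means `μ` and standard deviations `v` concentrates
simultaneously at all points of the finite domain `X`, with failure probability
at most `1/t²`. No independence across `x` is required. -/
theorem gaussian_simultaneous_concentration
    {X : Type*} [Fintype X] [Nonempty X] (t : ℕ) (ht : 0 < t)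
    {Ω : Type*} [MeasureSpace Ω] [IsProbabilityMeasure (ℙ : Measure Ω)]
    (Z : X → Ω → ℝ) (μ : X → ℝ) (v : X → ℝ) (hv : ∀ x, 0 ≤ v x)
    (hZ : ∀ x : X, Measure.map (Z x) ℙ = gaussianReal (μ x) ⟨(v x) ^ 2, sq_nonneg _⟩) :
    1 - ENNReal.ofReal (1 / (t : ℝ) ^ 2) ≤
      ℙ {ω : Ω | ∀ x : X,
          |Z x ω - μ x| ≤ Real.sqrt (2 * Real.log ((Fintype.card X : ℝ) * (t : ℝ) ^ 2)) * v x} := by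
  set N : ℕ := Fintype.card X with hN
  set β : ℝ := Real.sqrt (2 * Real.log ((N : ℝ) * (t : ℝ) ^ 2)) with hβdef
  have hβ : 0 ≤ β := Real.sqrt_nonneg _
  have hN1 : (1 : ℝ) ≤ (N : ℝ) := by exact_mod_cast Fintype.card_pos
  have ht1 : (1 : ℝ) ≤ (t : ℝ) := by exact_mod_cast ht
  have hNt : (1 : ℝ) ≤ (N : ℝ) * (t : ℝ) ^ 2 := by nlinarith
  have hNt0 : (0 : ℝ) < (N : ℝ) * (t : ℝ) ^ 2 := by linarith
  have hβ2 : β ^ 2 = 2 * Real.log ((N : ℝ) * (t : ℝ) ^ 2) :=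
    Real.sq_sqrt (mul_nonneg (by norm_num) (Real.log_nonneg hNt))
  have hexp : rexp (-β ^ 2 / 2) = 1 / ((N : ℝ) * (t : ℝ) ^ 2) := by
    rw [hβ2, show -(2 * Real.log ((N : ℝ) * (t : ℝ) ^ 2)) / 2
        = -Real.log ((N : ℝ) * (t : ℝ) ^ 2) by ring,
      Real.exp_neg, Real.exp_log hNt0, one_div]
  have hZm : ∀ x, AEMeasurable (Z x) ℙ := fun x =>
    aemeasurable_of_map_neZero (by rw [hZ x]; exact ⟨@IsProbabilityMeasure.ne_zero _ _ _ (instIsProbabilityMeasureGaussianReal _ _)⟩)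
  have hbad : ∀ x : X, ℙ {ω : Ω | β * v x < |Z x ω - μ x|}
      ≤ ENNReal.ofReal (1 / ((N : ℝ) * (t : ℝ) ^ 2)) := by
    intro x
    have hs : MeasurableSet {y : ℝ | β * v x < |y - μ x|} :=
      measurableSet_lt measurable_const ((measurable_id.sub_const (μ x)).abs)
    have : ℙ {ω : Ω | β * v x < |Z x ω - μ x|}
        = Measure.map (Z x) ℙ {y : ℝ | β * v x < |y - μ x|} := by
      rw [Measure.map_apply_of_aemeasurable (hZm x) hs]
      rfl
    rw [this, hZ x, ← hexp]
    exact gauss_tail (μ x) (v x) β (hv x) hβ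
  set G : Set Ω := {ω : Ω | ∀ x : X, |Z x ω - μ x| ≤ β * v x} with hG
  have hsub : Gᶜ ⊆ ⋃ x : X, {ω : Ω | β * v x < |Z x ω - μ x|} := by
    intro ω hω
    simp only [hG, Set.mem_compl_iff, Set.mem_setOf_eq, not_forall, not_le] at hω
    obtain ⟨x, hx⟩ := hω
    exact Set.mem_iUnion.2 ⟨x, hx⟩
  have hGc : ℙ Gᶜ ≤ ENNReal.ofReal (1 / (t : ℝ) ^ 2) := by
    calc ℙ Gᶜ ≤ ℙ (⋃ x : X, {ω : Ω | β * v x < |Z x ω - μ x|}) := measure_mono hsub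
      _ ≤ ∑' x : X, ℙ {ω : Ω | β * v x < |Z x ω - μ x|} := measure_iUnion_le _
      _ ≤ ∑' (y : X), ENNReal.ofReal (1 / ((N : ℝ) * (t : ℝ) ^ 2)) := ENNReal.tsum_le_tsum hbad
      _ = (N : ℝ≥0∞) * ENNReal.ofReal (1 / ((N : ℝ) * (t : ℝ) ^ 2)) := by
          rw [tsum_fintype, Finset.sum_const, Finset.card_univ, ← hN, nsmul_eq_mul]
      _ = ENNReal.ofReal ((N : ℝ) * (1 / ((N : ℝ) * (t : ℝ) ^ 2))) := by
          rw [ENNReal.ofReal_mul (by positivity), ENNReal.ofReal_natCast]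
      _ = ENNReal.ofReal (1 / (t : ℝ) ^ 2) := by
          congr 1
          field_simp
  rw [tsub_le_iff_right]
  calc (1 : ℝ≥0∞) = ℙ (Set.univ : Set Ω) := (measure_univ).symm
    _ ≤ ℙ G + ℙ Gᶜ := by
        rw [show (Set.univ : Set Ω) = G ∪ Gᶜ by simp]
        exact measure_union_le _ _
    _ ≤ ℙ G + ENNReal.ofReal (1 / (t : ℝ) ^ 2) := add_le_add_right hGc _
end

section
/- Let n be a positive integer, σ ∈ (0, 1], η ∈ [0, 1], K₀ > 0, and set K̂₀ = max(1, K₀). Let K, K̃ ∈ ℝ^{n×n} be symmetric positive semidefinite matrices with |K_{ij} − K̃_{ij}| ≤ η for all i, j; let k, k̃ ∈ ℝⁿ with |k_i| ≤ K₀ and |k_i − k̃_i| ≤ η for all i; and let κ, κ̃ ∈ ℝ with |κ − κ̃| ≤ η. Define the posterior variances v = κ − kᵀ(K + σ²I)⁻¹k and ṽ = κ̃ − k̃ᵀ(K̃ + σ²I)⁻¹k̃. Then |v − ṽ| ≤ η·(1 + 4·K̂₀²·n²/σ⁴). (The main displayed computation in the proof of Lemma 9: the difference of GP posterior variances under the exact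 and empirical NTK is controlled by the kernel approximation error η = (L+1)ε.) -/
open Matrix

private lemma pvp_sqle (s a : ℝ) (hs : 0 ≤ s) (ha : 0 ≤ a) (h : s ^ 2 ≤ a ^ 2) : s ≤ a := by
  nlinarith

private lemma pvp_dot_self_nonneg {n : ℕ} (x : Fin n → ℝ) : 0 ≤ x ⬝ᵥ x :=
  Finset.sum_nonneg fun i _ => mul_self_nonneg _

private lemma pvp_cs {n : ℕ} (x y : Fin n → ℝ) :
    (x ⬝ᵥ y) ^ 2 ≤ (x ⬝ᵥ x) * (y ⬝ᵥ y) := by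
  have h := Finset.sum_mul_sq_le_sq_mul_sq Finset.univ x y
  simpa [dotProduct, sq] using h

private lemma pvp_cs_abs {n : ℕ} (x y : Fin n → ℝ) (a b : ℝ) (ha : 0 ≤ a) (hb : 0 ≤ b)
    (hx : x ⬝ᵥ x ≤ a ^ 2) (hy : y ⬝ᵥ y ≤ b ^ 2) : |x ⬝ᵥ y| ≤ a * b := by
  apply pvp_sqle _ _ (abs_nonneg _) (mul_nonneg ha hb)
  rw [sq_abs, mul_pow]
  calc (x ⬝ᵥ y) ^ 2 ≤ (x ⬝ᵥ x) * (y ⬝ᵥ y) := pvp_cs x y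
    _ ≤ a ^ 2 * b ^ 2 := by
        have := pvp_dot_self_nonneg x
        have := pvp_dot_self_nonneg y
        nlinarith

private lemma pvp_sum_abs_sq {n : ℕ} (x : Fin n → ℝ) :
    (∑ i, |x i|) ^ 2 ≤ (n : ℝ) * (x ⬝ᵥ x) := by
  have h := Finset.sum_mul_sq_le_sq_mul_sq Finset.univ (fun _ : Fin n => (1 : ℝ))
    (fun i => |x i|)
  simpa [dotProduct, sq_abs, sq] using h

private lemma pvp_posDef {n : ℕ} (σ : ℝ) (hσ : 0 < σ) (S : Matrix (Fin n) (Fin n) ℝ)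
    (hS : S.PosSemidef) : (S + σ ^ 2 • (1 : Matrix (Fin n) (Fin n) ℝ)).PosDef := by
  refine Matrix.PosDef.of_dotProduct_mulVec_pos ?_ ?_
  · exact hS.1.add (by simp [Matrix.IsHermitian])
  · intro x hx
    have h1 : 0 ≤ x ⬝ᵥ (S *ᵥ x) := by simpa using hS.dotProduct_mulVec_nonneg x
    have h2 : 0 < x ⬝ᵥ x := by
      rcases (pvp_dot_self_nonneg x).lt_or_eq with h | h
      · exact h
      · exact absurd (dotProduct_self_eq_zero.mp h.symm) hx
    simp only [add_mulVec, smul_mulVec, one_mulVec, dotProduct_add, dotProduct_smul,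
      smul_eq_mul, star_trivial]
    have := mul_pos (pow_pos hσ 2) h2
    linarith

private lemma pvp_inv_cancel {n : ℕ} (A : Matrix (Fin n) (Fin n) ℝ) (hA : A.PosDef)
    (x : Fin n → ℝ) : A *ᵥ (A⁻¹ *ᵥ x) = x := by
  rw [mulVec_mulVec, Matrix.mul_nonsing_inv _ (isUnit_iff_ne_zero.mpr hA.det_pos.ne'),
    one_mulVec]

private lemma pvp_inv_bound {n : ℕ} (σ : ℝ) (hσ : 0 < σ) (S : Matrix (Fin n) (Fin n) ℝ)
    (hS : S.PosSemidef) (x : Fin n → ℝ) :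
    ((S + σ ^ 2 • (1 : Matrix (Fin n) (Fin n) ℝ))⁻¹ *ᵥ x) ⬝ᵥ
      ((S + σ ^ 2 • (1 : Matrix (Fin n) (Fin n) ℝ))⁻¹ *ᵥ x) ≤ (x ⬝ᵥ x) / σ ^ 4 := by
  set A := S + σ ^ 2 • (1 : Matrix (Fin n) (Fin n) ℝ) with hAdef
  have hA : A.PosDef := pvp_posDef σ hσ S hS
  set u := A⁻¹ *ᵥ x with hu
  have hAu : A *ᵥ u = x := pvp_inv_cancel A hA x
  have hquad : u ⬝ᵥ (A *ᵥ u) = u ⬝ᵥ (S *ᵥ u) + σ ^ 2 * (u ⬝ᵥ u) := by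
    simp [hAdef, add_mulVec, smul_mulVec, one_mulVec, dotProduct_add, dotProduct_smul,
      smul_eq_mul]
  have hSu : 0 ≤ u ⬝ᵥ (S *ᵥ u) := by simpa using hS.dotProduct_mulVec_nonneg u
  have h1 : σ ^ 2 * (u ⬝ᵥ u) ≤ u ⬝ᵥ x := by
    rw [← hAu] at *
    rw [hquad]; linarith
  have h2 : (u ⬝ᵥ x) ^ 2 ≤ (u ⬝ᵥ u) * (x ⬝ᵥ x) := pvp_cs u x
  have hd := pvp_dot_self_nonneg u
  have hxx := pvp_dot_self_nonneg x
  rcases hd.lt_or_eq with hd0 | hd0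
  · rw [le_div_iff₀ (by positivity)]
    have hmm : σ ^ 2 * (u ⬝ᵥ u) * (σ ^ 2 * (u ⬝ᵥ u)) ≤ (u ⬝ᵥ x) * (u ⬝ᵥ x) :=
      mul_self_le_mul_self (by positivity) h1
    have : (u ⬝ᵥ u) * ((u ⬝ᵥ u) * σ ^ 4) ≤ (u ⬝ᵥ u) * (x ⬝ᵥ x) := by nlinarith
    exact le_of_mul_le_mul_left this hd0
  · rw [← hd0]
    positivity

private lemma pvp_dot_symm {n : ℕ} (M : Matrix (Fin n) (Fin n) ℝ) (hM : Mᵀ = M)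
    (x y : Fin n → ℝ) : x ⬝ᵥ (M *ᵥ y) = y ⬝ᵥ (M *ᵥ x) := by
  rw [dotProduct_mulVec, ← mulVec_transpose, hM, dotProduct_comm]

private lemma pvp_entry_bilinear {n : ℕ} (D : Matrix (Fin n) (Fin n) ℝ) (η : ℝ) (hη : 0 ≤ η)
    (hD : ∀ i j, |D i j| ≤ η) (u w : Fin n → ℝ) :
    |u ⬝ᵥ (D *ᵥ w)| ≤ η * (∑ i, |u i|) * (∑ j, |w j|) := by
  calc |u ⬝ᵥ (D *ᵥ w)| ≤ ∑ i, |u i * ∑ j, D i j * w j| := by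
        exact Finset.abs_sum_le_sum_abs _ _
    _ ≤ ∑ i, |u i| * (η * ∑ j, |w j|) := by
        apply Finset.sum_le_sum
        intro i _
        rw [abs_mul]
        apply mul_le_mul_of_nonneg_left _ (abs_nonneg _)
        calc |∑ j, D i j * w j| ≤ ∑ j, |D i j * w j| := Finset.abs_sum_le_sum_abs _ _
          _ ≤ ∑ j, η * |w j| := by
              apply Finset.sum_le_sum
              intro j _
              rw [abs_mul]
              exact mul_le_mul_of_nonneg_right (hD i j) (abs_nonneg _)
          _ = η * ∑ j, |w j| := by rw [Finset.mul_sum]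
    _ = η * (∑ i, |u i|) * (∑ j, |w j|) := by
        rw [← Finset.sum_mul]; ring

set_option maxHeartbeats 1000000 in
/-- Main displayed computation in the proof of Lemma 9: the difference of GP posterior
variances under the exact and empirical NTK is controlled by the entrywise kernel
approximation error `η`. -/
theorem posterior_variance_perturbation
    (n : ℕ) (hn : 0 < n) (σ : ℝ) (hσ : 0 < σ) (hσ1 : σ ≤ 1)
    (η : ℝ) (hη : 0 ≤ η) (hη1 : η ≤ 1) (K₀ : ℝ) (hK₀ : 0 < K₀)
    (K Ktil : Matrix (Fin n) (Fin n) ℝ) (hK : K.PosSemidef) (hKtil : Ktil.PosSemidef)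
    (hKdiff : ∀ i j, |K i j - Ktil i j| ≤ η)
    (k ktil : Fin n → ℝ) (hk : ∀ i, |k i| ≤ K₀) (hkdiff : ∀ i, |k i - ktil i| ≤ η)
    (κ κtil : ℝ) (hκdiff : |κ - κtil| ≤ η) :
    |(κ - k ⬝ᵥ ((K + σ ^ 2 • (1 : Matrix (Fin n) (Fin n) ℝ))⁻¹ *ᵥ k)) -
        (κtil - ktil ⬝ᵥ ((Ktil + σ ^ 2 • (1 : Matrix (Fin n) (Fin n) ℝ))⁻¹ *ᵥ ktil))| ≤
      η * (1 + 4 * max 1 K₀ ^ 2 * (n : ℝ) ^ 2 / σ ^ 4) := by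
  set A := K + σ ^ 2 • (1 : Matrix (Fin n) (Fin n) ℝ) with hAdef
  set B := Ktil + σ ^ 2 • (1 : Matrix (Fin n) (Fin n) ℝ) with hBdef
  have hApd : A.PosDef := pvp_posDef σ hσ K hK
  have hBpd : B.PosDef := pvp_posDef σ hσ Ktil hKtil
  have hAdet : IsUnit A.det := isUnit_iff_ne_zero.mpr hApd.det_pos.ne'
  have hBdet : IsUnit B.det := isUnit_iff_ne_zero.mpr hBpd.det_pos.ne'
  have hAsym : (A⁻¹)ᵀ = A⁻¹ := by
    rw [← Matrix.conjTranspose_eq_transpose_of_trivial]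
    exact hApd.1.inv
  have hBsym : (B⁻¹)ᵀ = B⁻¹ := by
    rw [← Matrix.conjTranspose_eq_transpose_of_trivial]
    exact hBpd.1.inv
  -- inverse difference identity
  have hinvdiff : A⁻¹ - B⁻¹ = A⁻¹ * (Ktil - K) * B⁻¹ := by
    have hBA : Ktil - K = B - A := by rw [hAdef, hBdef, add_sub_add_right_eq_sub]
    rw [hBA, Matrix.mul_sub, Matrix.sub_mul, Matrix.nonsing_inv_mul A hAdet,
      Matrix.mul_assoc, Matrix.mul_nonsing_inv B hBdet, Matrix.mul_one, Matrix.one_mul]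
  set u : Fin n → ℝ := A⁻¹ *ᵥ k with hu
  set w : Fin n → ℝ := B⁻¹ *ᵥ k with hw
  set z : Fin n → ℝ := B⁻¹ *ᵥ (k + ktil) with hz
  -- algebraic decomposition
  have hdecomp : (κ - k ⬝ᵥ (A⁻¹ *ᵥ k)) - (κtil - ktil ⬝ᵥ (B⁻¹ *ᵥ ktil)) =
      (κ - κtil) - u ⬝ᵥ ((Ktil - K) *ᵥ w) - (k - ktil) ⬝ᵥ z := by
    have e1 : k ⬝ᵥ (A⁻¹ *ᵥ k) - k ⬝ᵥ (B⁻¹ *ᵥ k) = u ⬝ᵥ ((Ktil - K) *ᵥ w) := by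
      have : k ⬝ᵥ (A⁻¹ *ᵥ k) - k ⬝ᵥ (B⁻¹ *ᵥ k) = k ⬝ᵥ ((A⁻¹ - B⁻¹) *ᵥ k) := by
        rw [Matrix.sub_mulVec, dotProduct_sub]
      rw [this, hinvdiff, ← Matrix.mulVec_mulVec, ← Matrix.mulVec_mulVec,
        pvp_dot_symm A⁻¹ hAsym, dotProduct_comm]
    have e2 : k ⬝ᵥ (B⁻¹ *ᵥ k) - ktil ⬝ᵥ (B⁻¹ *ᵥ ktil) = (k - ktil) ⬝ᵥ z := by
      have hsym : k ⬝ᵥ (B⁻¹ *ᵥ ktil) = ktil ⬝ᵥ (B⁻¹ *ᵥ k) := pvp_dot_symm B⁻¹ hBsym k ktil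
      rw [hz, Matrix.mulVec_add, dotProduct_add, sub_dotProduct, sub_dotProduct]
      linarith
    linarith
  rw [hdecomp]
  -- quantitative bounds
  have hc1 : (1 : ℝ) ≤ max 1 K₀ := le_max_left _ _
  have hc0 : K₀ ≤ max 1 K₀ := le_max_right _ _
  have hn1 : (1 : ℝ) ≤ (n : ℝ) := by exact_mod_cast hn
  have hkk : k ⬝ᵥ k ≤ (n : ℝ) * K₀ ^ 2 := by
    rw [dotProduct]
    calc ∑ i, k i * k i ≤ ∑ _i : Fin n, K₀ ^ 2 := by
          apply Finset.sum_le_sum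
          intro i _
          have := hk i
          nlinarith [abs_nonneg (k i), neg_abs_le (k i), le_abs_self (k i)]
      _ = (n : ℝ) * K₀ ^ 2 := by simp [mul_comm]
  -- bound on ∑ |u i| and ∑ |w i|
  have husum : ∑ i, |u i| ≤ (n : ℝ) * K₀ / σ ^ 2 := by
    apply pvp_sqle _ _ (Finset.sum_nonneg fun i _ => abs_nonneg _) (by positivity)
    calc (∑ i, |u i|) ^ 2 ≤ (n : ℝ) * (u ⬝ᵥ u) := pvp_sum_abs_sq u
      _ ≤ (n : ℝ) * ((k ⬝ᵥ k) / σ ^ 4) := by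
          apply mul_le_mul_of_nonneg_left _ (Nat.cast_nonneg n)
          exact pvp_inv_bound σ hσ K hK k
      _ ≤ (n : ℝ) * (((n : ℝ) * K₀ ^ 2) / σ ^ 4) := by
          apply mul_le_mul_of_nonneg_left _ (Nat.cast_nonneg n)
          exact div_le_div_of_nonneg_right hkk (by positivity)
      _ = ((n : ℝ) * K₀ / σ ^ 2) ^ 2 := by field_simp
  have hwsum : ∑ i, |w i| ≤ (n : ℝ) * K₀ / σ ^ 2 := by
    apply pvp_sqle _ _ (Finset.sum_nonneg fun i _ => abs_nonneg _) (by positivity)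
    calc (∑ i, |w i|) ^ 2 ≤ (n : ℝ) * (w ⬝ᵥ w) := pvp_sum_abs_sq w
      _ ≤ (n : ℝ) * ((k ⬝ᵥ k) / σ ^ 4) := by
          apply mul_le_mul_of_nonneg_left _ (Nat.cast_nonneg n)
          exact pvp_inv_bound σ hσ Ktil hKtil k
      _ ≤ (n : ℝ) * (((n : ℝ) * K₀ ^ 2) / σ ^ 4) := by
          apply mul_le_mul_of_nonneg_left _ (Nat.cast_nonneg n)
          exact div_le_div_of_nonneg_right hkk (by positivity)
      _ = ((n : ℝ) * K₀ / σ ^ 2) ^ 2 := by field_simp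
  -- T1
  have hDdiff : ∀ i j, |(Ktil - K) i j| ≤ η := by
    intro i j
    have := hKdiff i j
    simpa [Matrix.sub_apply, abs_sub_comm] using this
  have hT1 : |u ⬝ᵥ ((Ktil - K) *ᵥ w)| ≤ η * ((n : ℝ) * K₀ / σ ^ 2) * ((n : ℝ) * K₀ / σ ^ 2) := by
    calc |u ⬝ᵥ ((Ktil - K) *ᵥ w)| ≤ η * (∑ i, |u i|) * (∑ j, |w j|) :=
          pvp_entry_bilinear _ η hη hDdiff u w
      _ ≤ η * ((n : ℝ) * K₀ / σ ^ 2) * ((n : ℝ) * K₀ / σ ^ 2) := by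
          apply mul_le_mul
          · exact mul_le_mul_of_nonneg_left husum hη
          · exact hwsum
          · exact Finset.sum_nonneg fun i _ => abs_nonneg _
          · positivity
  -- T2
  have hT2 : |(k - ktil) ⬝ᵥ z| ≤ ((n : ℝ) * η) * ((n : ℝ) * (2 * K₀ + η) / σ ^ 2) := by
    apply pvp_cs_abs
    · positivity
    · positivity
    · -- (k - ktil) ⬝ᵥ (k - ktil) ≤ (n η)^2
      rw [dotProduct]
      calc ∑ i, (k - ktil) i * (k - ktil) i ≤ ∑ _i : Fin n, η ^ 2 := by
            apply Finset.sum_le_sum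
            intro i _
            have := hkdiff i
            simp only [Pi.sub_apply]
            nlinarith [abs_nonneg (k i - ktil i), neg_abs_le (k i - ktil i),
              le_abs_self (k i - ktil i)]
        _ = (n : ℝ) * η ^ 2 := by simp [mul_comm]
        _ ≤ ((n : ℝ) * η) ^ 2 := by nlinarith
    · -- z ⬝ᵥ z ≤ (n (2K₀+η)/σ²)²
      calc z ⬝ᵥ z ≤ ((k + ktil) ⬝ᵥ (k + ktil)) / σ ^ 4 := pvp_inv_bound σ hσ Ktil hKtil _
        _ ≤ ((n : ℝ) * (2 * K₀ + η) ^ 2) / σ ^ 4 := by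
            apply div_le_div_of_nonneg_right _ (by positivity)
            rw [dotProduct]
            calc ∑ i, (k + ktil) i * (k + ktil) i ≤ ∑ _i : Fin n, (2 * K₀ + η) ^ 2 := by
                  apply Finset.sum_le_sum
                  intro i _
                  have h1 := hk i
                  have h2 := hkdiff i
                  have h3 : |ktil i| ≤ K₀ + η := by
                    calc |ktil i| = |k i - (k i - ktil i)| := by ring_nf
                      _ ≤ |k i| + |k i - ktil i| := abs_sub _ _
                      _ ≤ K₀ + η := add_le_add h1 h2
                  simp only [Pi.add_apply]
                  nlinarith [neg_abs_le (k i), le_abs_self (k i),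
                    neg_abs_le (ktil i), le_abs_self (ktil i)]
              _ = (n : ℝ) * (2 * K₀ + η) ^ 2 := by simp [mul_comm]
        _ ≤ ((n : ℝ) * (2 * K₀ + η) / σ ^ 2) ^ 2 := by
            rw [div_pow, mul_pow]
            have hnn : (n : ℝ) ≤ (n : ℝ) ^ 2 := by nlinarith
            apply div_le_div₀ (by positivity)
              (mul_le_mul_of_nonneg_right hnn (sq_nonneg _)) (by positivity)
              (le_of_eq (by ring))
  -- combine
  have hfinal : |(κ - κtil) - u ⬝ᵥ ((Ktil - K) *ᵥ w) - (k - ktil) ⬝ᵥ z| ≤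
      η + η * ((n : ℝ) * K₀ / σ ^ 2) * ((n : ℝ) * K₀ / σ ^ 2) +
        ((n : ℝ) * η) * ((n : ℝ) * (2 * K₀ + η) / σ ^ 2) := by
    calc |(κ - κtil) - u ⬝ᵥ ((Ktil - K) *ᵥ w) - (k - ktil) ⬝ᵥ z|
        ≤ |(κ - κtil) - u ⬝ᵥ ((Ktil - K) *ᵥ w)| + |(k - ktil) ⬝ᵥ z| := abs_sub _ _
      _ ≤ |κ - κtil| + |u ⬝ᵥ ((Ktil - K) *ᵥ w)| + |(k - ktil) ⬝ᵥ z| := by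
          have := abs_sub (κ - κtil) (u ⬝ᵥ ((Ktil - K) *ᵥ w))
          linarith
      _ ≤ η + η * ((n : ℝ) * K₀ / σ ^ 2) * ((n : ℝ) * K₀ / σ ^ 2) +
            ((n : ℝ) * η) * ((n : ℝ) * (2 * K₀ + η) / σ ^ 2) := by
          linarith [hκdiff, hT1, hT2]
  refine hfinal.trans ?_
  -- final numeric inequality
  set c : ℝ := max 1 K₀ with hc
  have hσ2 : σ ^ 2 ≤ 1 := by nlinarith
  have hσ4pos : (0 : ℝ) < σ ^ 4 := by positivity
  have hexp : η * (1 + 4 * c ^ 2 * (n : ℝ) ^ 2 / σ ^ 4) =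
      η + η * (4 * c ^ 2 * (n : ℝ) ^ 2 / σ ^ 4) := by ring
  rw [hexp]
  have key : η * ((n : ℝ) * K₀ / σ ^ 2) * ((n : ℝ) * K₀ / σ ^ 2) +
      ((n : ℝ) * η) * ((n : ℝ) * (2 * K₀ + η) / σ ^ 2) ≤ η * (4 * c ^ 2 * (n : ℝ) ^ 2 / σ ^ 4) := by
    have h1 : η * ((n : ℝ) * K₀ / σ ^ 2) * ((n : ℝ) * K₀ / σ ^ 2) =
        η * ((n : ℝ) ^ 2 * K₀ ^ 2) / σ ^ 4 := by
      field_simp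
    have h2 : ((n : ℝ) * η) * ((n : ℝ) * (2 * K₀ + η) / σ ^ 2) =
        η * ((n : ℝ) ^ 2 * (2 * K₀ + η) * σ ^ 2) / σ ^ 4 := by
      field_simp
    rw [h1, h2, ← add_div, ← mul_div_assoc]
    apply div_le_div_of_nonneg_right _ hσ4pos.le
    -- η n² K₀² + η n² (2K₀+η) σ² ≤ η 4 c² n²
    have hK₀c : K₀ ^ 2 ≤ c ^ 2 := by nlinarith
    have h3 : (2 * K₀ + η) * σ ^ 2 ≤ 3 * c ^ 2 := by nlinarith
    nlinarith [sq_nonneg ((n : ℝ)), mul_nonneg hη (sq_nonneg ((n : ℝ)))]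
  linarith
end

section
/- Let X be a set and let k, k̃ : X × X → ℝ be symmetric positive semidefinite kernels such that |k(x, x')| ≤ K₀ and |k(x, x') − k̃(x, x')| ≤ η for all x, x' ∈ X, where K₀ > 0 and η ∈ [0, 1]; set K̂₀ = max(1, K₀) and let σ ∈ (0, 1]. Fix points x₁, …, x_n ∈ X and a test point x ∈ X, and define the Gram matrix K = (k(x_i, x_j))_{i,j}, the vector kvec = (k(x, x_i))_i, the posterior variance v = k(x, x) − kvecᵀ(K + σ²I)⁻¹kvec, and correspondingly ṽ for k̃. Then v ≥ 0, ṽ ≥ 0, and |√v − √ṽ| ≤ √(η·(1 + 4·K̂₀²·n²/σ⁴)). (Lemma 9 of the paper: the GP posterior standard deviations computed with the exact NTK and with the empirical NTK differ by at most √((L+1)ε·(1 + 4K̂₀²t²/σ⁴)) when the kernels differ entrywise by at most η = (L+1)ε.) -/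
open Matrix

/-- `k : X → X → ℝ` is a symmetric positive semidefinite kernel: it is symmetric and
every finite Gram matrix is positive semidefinite. -/
def IsPSDKernel {X : Type*} (k : X → X → ℝ) : Prop :=
  (∀ x x', k x x' = k x' x) ∧
    ∀ (m : ℕ) (x : Fin m → X), (Matrix.of fun i j => k (x i) (x j)).PosSemidef

/-- The GP posterior variance at a test point `z`, given a kernel `k`, a noise level
`σ` and observed inputs `x₁, …, x_n`:
`v = k(z,z) − kvecᵀ(K + σ²I)⁻¹kvec` where `K = (k(x_i,x_j))_{i,j}` and
`kvec = (k(z,x_i))_i`. -/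
noncomputable def postVar {X : Type*} (k : X → X → ℝ) (σ : ℝ) {n : ℕ}
    (x : Fin n → X) (z : X) : ℝ :=
  k z z - (fun i => k z (x i)) ⬝ᵥ
    (((Matrix.of fun i j => k (x i) (x j)) + σ ^ 2 • (1 : Matrix (Fin n) (Fin n) ℝ))⁻¹ *ᵥ
      fun i => k z (x i))

lemma aux_quad {X : Type*} (k : X → X → ℝ) (hk : IsPSDKernel k)
    {n : ℕ} (x : Fin n → X) (z : X) (c : ℝ) (w : Fin n → ℝ) :
    0 ≤ c * c * k z z + 2 * c * (∑ i, w i * k z (x i)) +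
      ∑ i, ∑ j, w i * w j * k (x i) (x j) := by
  have h := (hk.2 (n+1) (Fin.cons z x)).dotProduct_mulVec_nonneg (Fin.cons c w)
  simp only [star_trivial, dotProduct, mulVec, of_apply, Fin.sum_univ_succ, Fin.cons_zero,
    Fin.cons_succ, dotProduct] at h
  have hsym : ∀ i, k (x i) z = k z (x i) := fun i => hk.1 _ _
  simp only [hsym] at h
  have e1 : ∑ i, w i * (k z (x i) * c + ∑ j, k (x i) (x j) * w j) =
      (∑ i, w i * k z (x i)) * c + ∑ i, ∑ j, w i * w j * k (x i) (x j) := by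
    simp only [mul_add, Finset.sum_add_distrib, Finset.mul_sum]
    congr 1
    · rw [Finset.sum_mul]
      exact Finset.sum_congr rfl fun i _ => by ring
    · exact Finset.sum_congr rfl fun i _ => Finset.sum_congr rfl fun j _ => by ring
  have e2 : c * (k z z * c + ∑ i, k z (x i) * w i) =
      c * c * k z z + c * ∑ i, w i * k z (x i) := by
    have : ∑ i, k z (x i) * w i = ∑ i, w i * k z (x i) :=
      Finset.sum_congr rfl fun i _ => by ring
    rw [this]; ring
  have e3 : (∑ i, w i * k z (x i)) * c = c * (∑ i, w i * k z (x i)) := mul_comm _ _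
  linarith

lemma aux_posdef {n : ℕ} {K : Matrix (Fin n) (Fin n) ℝ} (hK : K.PosSemidef)
    {σ : ℝ} (hσ : 0 < σ) : (K + σ ^ 2 • (1 : Matrix (Fin n) (Fin n) ℝ)).PosDef := by
  refine Matrix.PosDef.posSemidef_add hK ?_
  rw [smul_one_eq_diagonal]
  exact Matrix.posDef_diagonal_iff.mpr fun i => by positivity

lemma aux_core {X : Type*} (k : X → X → ℝ) (hk : IsPSDKernel k)
    {σ : ℝ} (hσ : 0 < σ) {n : ℕ} (x : Fin n → X) (z : X) :
    σ ^ 2 * ((((Matrix.of fun i j => k (x i) (x j)) + σ ^ 2 • (1 : Matrix (Fin n) (Fin n) ℝ))⁻¹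
        *ᵥ fun i => k z (x i)) ⬝ᵥ
      (((Matrix.of fun i j => k (x i) (x j)) + σ ^ 2 • (1 : Matrix (Fin n) (Fin n) ℝ))⁻¹
        *ᵥ fun i => k z (x i))) +
      ((fun i => k z (x i)) ⬝ᵥ
        (((Matrix.of fun i j => k (x i) (x j)) + σ ^ 2 • (1 : Matrix (Fin n) (Fin n) ℝ))⁻¹
          *ᵥ fun i => k z (x i))) ≤ k z z := by
  set Km : Matrix (Fin n) (Fin n) ℝ := Matrix.of fun i j => k (x i) (x j) with hKm
  set A : Matrix (Fin n) (Fin n) ℝ := Km + σ ^ 2 • 1 with hA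
  set kv : Fin n → ℝ := fun i => k z (x i) with hkv
  have hAd : A.PosDef := aux_posdef (hk.2 n x) hσ
  set w : Fin n → ℝ := A⁻¹ *ᵥ kv with hw
  have hAw : A *ᵥ w = kv := by
    rw [hw, mulVec_mulVec, mul_nonsing_inv _ hAd.det_pos.ne'.isUnit, one_mulVec]
  have hKw : Km *ᵥ w = kv - σ ^ 2 • w := by
    have h1 : A *ᵥ w = Km *ᵥ w + σ ^ 2 • w := by
      rw [hA, add_mulVec, smul_mulVec, one_mulVec]
    rw [hAw] at h1
    rw [h1]; abel
  have h := aux_quad k hk x z 1 (fun i => -(w i))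
  have e1 : ∑ i, (-(w i)) * k z (x i) = -(w ⬝ᵥ kv) := by
    simp [dotProduct, Finset.sum_neg_distrib, hkv]
  have e2 : ∑ i, ∑ j, (-(w i)) * (-(w j)) * k (x i) (x j) = w ⬝ᵥ (Km *ᵥ w) := by
    simp only [dotProduct, mulVec, hKm, of_apply, Finset.mul_sum]
    exact Finset.sum_congr rfl fun i _ => Finset.sum_congr rfl fun j _ => by ring
  rw [e1, e2, hKw, dotProduct_sub, dotProduct_smul] at h
  have e3 : w ⬝ᵥ kv = kv ⬝ᵥ w := dotProduct_comm _ _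
  have e4 : w ⬝ᵥ w = (A⁻¹ *ᵥ kv) ⬝ᵥ (A⁻¹ *ᵥ kv) := by rw [hw]
  simp only [smul_eq_mul] at h
  nlinarith [h]

lemma aux_sqrt_abs {a b : ℝ} (ha : 0 ≤ a) (hb : 0 ≤ b) :
    |Real.sqrt a - Real.sqrt b| ≤ Real.sqrt |a - b| := by
  wlog hab : b ≤ a generalizing a b
  · rw [abs_sub_comm, abs_sub_comm a b]; exact this hb ha (le_of_not_ge hab)
  rw [abs_of_nonneg (sub_nonneg.2 (Real.sqrt_le_sqrt hab)), abs_of_nonneg (sub_nonneg.2 hab)]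
  have h1 : Real.sqrt a ≤ Real.sqrt b + Real.sqrt (a - b) := by
    rw [← Real.sqrt_sq (by positivity : (0:ℝ) ≤ Real.sqrt b + Real.sqrt (a - b))]
    apply Real.sqrt_le_sqrt
    nlinarith [Real.sq_sqrt hb, Real.sq_sqrt (sub_nonneg.2 hab), Real.sqrt_nonneg b,
      Real.sqrt_nonneg (a - b)]
  linarith

lemma aux_S {n : ℕ} (w : Fin n → ℝ) : (∑ i, |w i|) ^ 2 ≤ n * (w ⬝ᵥ w) := by
  have h := sq_sum_le_card_mul_sum_sq (s := (Finset.univ : Finset (Fin n)))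
    (f := fun i => |w i|)
  simpa [dotProduct, sq_abs, pow_two] using h

lemma aux_dot_abs {n : ℕ} (u v : Fin n → ℝ) (η : ℝ) (hu : ∀ i, |u i| ≤ η) :
    |u ⬝ᵥ v| ≤ η * ∑ i, |v i| := by
  calc |u ⬝ᵥ v| ≤ ∑ i, |u i * v i| := Finset.abs_sum_le_sum_abs _ _
    _ ≤ ∑ i, η * |v i| := by
        refine Finset.sum_le_sum fun i _ => ?_
        rw [abs_mul]
        exact mul_le_mul_of_nonneg_right (hu i) (abs_nonneg _)
    _ = η * ∑ i, |v i| := by rw [Finset.mul_sum]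

lemma aux_bilin {n : ℕ} (u v : Fin n → ℝ) (E : Matrix (Fin n) (Fin n) ℝ) (η : ℝ) (hη0 : 0 ≤ η)
    (hE : ∀ i j, |E i j| ≤ η) :
    |u ⬝ᵥ (E *ᵥ v)| ≤ η * (∑ i, |u i|) * (∑ j, |v j|) := by
  calc |u ⬝ᵥ (E *ᵥ v)| ≤ ∑ i, |u i * (E *ᵥ v) i| := Finset.abs_sum_le_sum_abs _ _
    _ ≤ ∑ i, |u i| * (η * ∑ j, |v j|) := by
        refine Finset.sum_le_sum fun i _ => ?_
        rw [abs_mul]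
        refine mul_le_mul_of_nonneg_left ?_ (abs_nonneg _)
        calc |(E *ᵥ v) i| = |∑ j, E i j * v j| := by rw [mulVec]; rfl
          _ ≤ ∑ j, |E i j * v j| := Finset.abs_sum_le_sum_abs _ _
          _ ≤ ∑ j, η * |v j| := by
              refine Finset.sum_le_sum fun j _ => ?_
              rw [abs_mul]
              exact mul_le_mul_of_nonneg_right (hE i j) (abs_nonneg _)
          _ = η * ∑ j, |v j| := by rw [Finset.mul_sum]
    _ = η * (∑ i, |u i|) * (∑ j, |v j|) := by rw [← Finset.sum_mul]; ring

lemma aux_arith (Kh σ S St : ℝ) (n : ℕ) (hKh1 : 1 ≤ Kh) (hσ : 0 < σ) (hσ1 : σ ≤ 1)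
    (hS0 : 0 ≤ S) (hSt0 : 0 ≤ St)
    (hS2 : S ^ 2 ≤ n * Kh / σ ^ 2) (hSt2 : St ^ 2 ≤ n * (2 * Kh) / σ ^ 2) :
    1 + S + St + St * S ≤ 1 + 4 * Kh ^ 2 * (n : ℝ) ^ 2 / σ ^ 4 := by
  have hσ2 : (0:ℝ) < σ ^ 2 := by positivity
  rcases Nat.eq_zero_or_pos n with hn | hn
  · subst hn
    simp only [Nat.cast_zero, zero_mul] at hS2 hSt2 ⊢
    rw [zero_div] at hS2 hSt2
    have hS : S = 0 := by nlinarith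
    have hSt : St = 0 := by nlinarith
    rw [hS, hSt]
    have : (0:ℝ) ≤ 4 * Kh ^ 2 * (0:ℝ) ^ 2 / σ ^ 4 := by positivity
    nlinarith
  · have hn1 : (1:ℝ) ≤ n := by exact_mod_cast hn
    obtain ⟨b, hb⟩ : ∃ b : ℝ, b = n * Kh / σ ^ 2 := ⟨_, rfl⟩
    have hS2' : S ^ 2 ≤ b := by rw [hb]; exact hS2
    have hSt2' : St ^ 2 ≤ 2 * b := by
      rw [hb]
      calc St ^ 2 ≤ n * (2 * Kh) / σ ^ 2 := hSt2
        _ = 2 * (n * Kh / σ ^ 2) := by ring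
    have hb1 : (1:ℝ) ≤ b := by
      rw [hb, le_div_iff₀ hσ2]
      nlinarith
    have hSb : S ≤ b := by nlinarith
    have hStb : St ≤ 3 / 2 * b := by nlinarith
    have hb2 : b ^ 2 = Kh ^ 2 * (n : ℝ) ^ 2 / σ ^ 4 := by
      rw [hb]; field_simp
    have hkey : S + St + St * S ≤ 4 * b ^ 2 := by nlinarith
    have h4 : (4:ℝ) * Kh ^ 2 * (n:ℝ) ^ 2 / σ ^ 4 = 4 * (Kh ^ 2 * (n:ℝ) ^ 2 / σ ^ 4) := by
      ring
    rw [h4, ← hb2]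
    linarith

/-- Lemma 9 of the paper: the GP posterior standard deviations computed with the exact
NTK `k` and with the empirical NTK `k̃` differ by at most
`√(η·(1 + 4K̂₀²n²/σ⁴))` when the kernels differ entrywise by at most `η`. -/
theorem posterior_stddev_perturbation
    {X : Type*} (k ktil : X → X → ℝ)
    (hk : IsPSDKernel k) (hktil : IsPSDKernel ktil)
    (K₀ η : ℝ) (hK₀ : 0 < K₀) (hη0 : 0 ≤ η) (hη1 : η ≤ 1)
    (hbound : ∀ x x', |k x x'| ≤ K₀)
    (hdiff : ∀ x x', |k x x' - ktil x x'| ≤ η)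
    (σ : ℝ) (hσ : 0 < σ) (hσ1 : σ ≤ 1)
    (n : ℕ) (x : Fin n → X) (z : X) :
    0 ≤ postVar k σ x z ∧ 0 ≤ postVar ktil σ x z ∧
      |Real.sqrt (postVar k σ x z) - Real.sqrt (postVar ktil σ x z)| ≤
        Real.sqrt (η * (1 + 4 * max 1 K₀ ^ 2 * (n : ℝ) ^ 2 / σ ^ 4)) := by
  have hσ2 : (0:ℝ) < σ ^ 2 := by positivity
  set Kh := max 1 K₀ with hKh
  have hKh1 : (1:ℝ) ≤ Kh := le_max_left _ _
  have hKhK : K₀ ≤ Kh := le_max_right _ _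
  set Km : Matrix (Fin n) (Fin n) ℝ := Matrix.of fun i j => k (x i) (x j) with hKm
  set Kt : Matrix (Fin n) (Fin n) ℝ := Matrix.of fun i j => ktil (x i) (x j) with hKt
  set A : Matrix (Fin n) (Fin n) ℝ := Km + σ ^ 2 • 1 with hA
  set At : Matrix (Fin n) (Fin n) ℝ := Kt + σ ^ 2 • 1 with hAt
  set kv : Fin n → ℝ := fun i => k z (x i) with hkv
  set kt : Fin n → ℝ := fun i => ktil z (x i) with hkt
  have hAd : A.PosDef := aux_posdef (hk.2 n x) hσ
  have hAtd : At.PosDef := aux_posdef (hktil.2 n x) hσ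
  set w : Fin n → ℝ := A⁻¹ *ᵥ kv with hw
  set wt : Fin n → ℝ := At⁻¹ *ᵥ kt with hwt
  have hcore : σ ^ 2 * (w ⬝ᵥ w) + kv ⬝ᵥ w ≤ k z z := aux_core k hk hσ x z
  have hcoret : σ ^ 2 * (wt ⬝ᵥ wt) + kt ⬝ᵥ wt ≤ ktil z z := aux_core ktil hktil hσ x z
  have hpv : postVar k σ x z = k z z - kv ⬝ᵥ w := rfl
  have hpvt : postVar ktil σ x z = ktil z z - kt ⬝ᵥ wt := rfl
  have hkvw : 0 ≤ kv ⬝ᵥ w := by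
    have h := (hAd.inv.posSemidef).dotProduct_mulVec_nonneg kv
    simpa using h
  have hktwt : 0 ≤ kt ⬝ᵥ wt := by
    have h := (hAtd.inv.posSemidef).dotProduct_mulVec_nonneg kt
    simpa using h
  have hwn : 0 ≤ w ⬝ᵥ w := Finset.sum_nonneg fun i _ => mul_self_nonneg _
  have hwtn : 0 ≤ wt ⬝ᵥ wt := Finset.sum_nonneg fun i _ => mul_self_nonneg _
  -- the decomposition identity
  have hdet : IsUnit A.det := hAd.det_pos.ne'.isUnit
  have hdett : IsUnit At.det := hAtd.det_pos.ne'.isUnit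
  have hAw : A *ᵥ w = kv := by
    rw [hw, mulVec_mulVec, mul_nonsing_inv _ hdet, one_mulVec]
  have hAtwt : At *ᵥ wt = kt := by
    rw [hwt, mulVec_mulVec, mul_nonsing_inv _ hdett, one_mulVec]
  have hAtT : Atᵀ = At := by
    have h := hAtd.isHermitian
    rwa [Matrix.IsHermitian, conjTranspose_eq_transpose_of_trivial] at h
  clear_value Km Kt A At kv kt w wt
  have hmid : kt ⬝ᵥ w - wt ⬝ᵥ kv = wt ⬝ᵥ ((At - A) *ᵥ w) := by
    rw [sub_mulVec, dotProduct_sub, hAw]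
    congr 1
    rw [dotProduct_mulVec]
    congr 1
    rw [← hAtT, vecMul_transpose, hAtwt]
  have hident : kv ⬝ᵥ w - kt ⬝ᵥ wt =
      (kv - kt) ⬝ᵥ w + wt ⬝ᵥ ((At - A) *ᵥ w) + wt ⬝ᵥ (kv - kt) := by
    rw [← hmid, sub_dotProduct, dotProduct_sub, dotProduct_comm kt wt]
    ring
  -- entrywise bounds
  have hdE : ∀ i j, |(At - A) i j| ≤ η := by
    intro i j
    have : (At - A) i j = ktil (x i) (x j) - k (x i) (x j) := by
      simp [hAt, hA, hKt, hKm, Matrix.sub_apply, Matrix.add_apply]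
    rw [this, abs_sub_comm]
    exact hdiff _ _
  have hdv : ∀ i, |(kv - kt) i| ≤ η := fun i => by
    simp only [Pi.sub_apply, hkv, hkt]
    exact hdiff z (x i)
  have hv0 : 0 ≤ postVar k σ x z := by
    rw [hpv]
    have h0 : 0 ≤ σ ^ 2 * (w ⬝ᵥ w) := mul_nonneg hσ2.le hwn
    linarith [hcore]
  have hvt0 : 0 ≤ postVar ktil σ x z := by
    rw [hpvt]
    have h0 : 0 ≤ σ ^ 2 * (wt ⬝ᵥ wt) := mul_nonneg hσ2.le hwtn
    linarith [hcoret]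
  refine ⟨hv0, hvt0, ?_⟩
  -- bounds on kernel diagonal values
  have hκ : k z z ≤ Kh := (le_abs_self _).trans ((hbound z z).trans hKhK)
  have hκt : ktil z z ≤ 2 * Kh := by
    have h1 := hdiff z z
    have h2 := (le_abs_self _).trans ((hbound z z).trans hKhK)
    have := abs_le.1 h1
    linarith
  set S := ∑ i, |w i| with hS
  set St := ∑ i, |wt i| with hSt
  have hS0 : 0 ≤ S := Finset.sum_nonneg fun i _ => abs_nonneg _
  have hSt0 : 0 ≤ St := Finset.sum_nonneg fun i _ => abs_nonneg _
  have hS2 : S ^ 2 ≤ n * Kh / σ ^ 2 := by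
    have h1 : S ^ 2 ≤ n * (w ⬝ᵥ w) := aux_S w
    have h2 : σ ^ 2 * (w ⬝ᵥ w) ≤ Kh := by linarith [hcore, hkvw, hκ]
    rw [le_div_iff₀ hσ2]
    calc S ^ 2 * σ ^ 2 ≤ (n * (w ⬝ᵥ w)) * σ ^ 2 := by nlinarith
      _ = n * (σ ^ 2 * (w ⬝ᵥ w)) := by ring
      _ ≤ n * Kh := by
          exact mul_le_mul_of_nonneg_left h2 (Nat.cast_nonneg n)
  have hSt2 : St ^ 2 ≤ n * (2 * Kh) / σ ^ 2 := by
    have h1 : St ^ 2 ≤ n * (wt ⬝ᵥ wt) := aux_S wt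
    have h2 : σ ^ 2 * (wt ⬝ᵥ wt) ≤ 2 * Kh := by linarith [hcoret, hktwt, hκt]
    rw [le_div_iff₀ hσ2]
    calc St ^ 2 * σ ^ 2 ≤ (n * (wt ⬝ᵥ wt)) * σ ^ 2 :=
        mul_le_mul_of_nonneg_right h1 hσ2.le
      _ = n * (σ ^ 2 * (wt ⬝ᵥ wt)) := by ring
      _ ≤ n * (2 * Kh) := mul_le_mul_of_nonneg_left h2 (Nat.cast_nonneg n)
  have t1 : |(kv - kt) ⬝ᵥ w| ≤ η * S := aux_dot_abs _ _ η hdv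
  have t2 : |wt ⬝ᵥ ((At - A) *ᵥ w)| ≤ η * St * S := aux_bilin _ _ _ η hη0 hdE
  have t3 : |wt ⬝ᵥ (kv - kt)| ≤ η * St := by
    rw [dotProduct_comm]
    exact aux_dot_abs _ _ η hdv
  have hκd : |k z z - ktil z z| ≤ η := hdiff z z
  have hvdiff : |postVar k σ x z - postVar ktil σ x z| ≤ η * (1 + S + St + St * S) := by
    rw [hpv, hpvt]
    have e : k z z - kv ⬝ᵥ w - (ktil z z - kt ⬝ᵥ wt) =
        (k z z - ktil z z) - ((kv - kt) ⬝ᵥ w + wt ⬝ᵥ ((At - A) *ᵥ w) + wt ⬝ᵥ (kv - kt)) := by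
      rw [← hident]; ring
    rw [e]
    calc |(k z z - ktil z z) - ((kv - kt) ⬝ᵥ w + wt ⬝ᵥ ((At - A) *ᵥ w) + wt ⬝ᵥ (kv - kt))|
        ≤ |k z z - ktil z z| + |(kv - kt) ⬝ᵥ w + wt ⬝ᵥ ((At - A) *ᵥ w) + wt ⬝ᵥ (kv - kt)| :=
          abs_sub _ _
      _ ≤ |k z z - ktil z z| + (|(kv - kt) ⬝ᵥ w| + |wt ⬝ᵥ ((At - A) *ᵥ w)| + |wt ⬝ᵥ (kv - kt)|) := by
          have := abs_add_le ((kv - kt) ⬝ᵥ w + wt ⬝ᵥ ((At - A) *ᵥ w)) (wt ⬝ᵥ (kv - kt))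
          have h2 := abs_add_le ((kv - kt) ⬝ᵥ w) (wt ⬝ᵥ ((At - A) *ᵥ w))
          linarith
      _ ≤ η + (η * S + η * St * S + η * St) := by linarith
      _ = η * (1 + S + St + St * S) := by ring
  have harith : 1 + S + St + St * S ≤ 1 + 4 * Kh ^ 2 * (n : ℝ) ^ 2 / σ ^ 4 :=
    aux_arith Kh σ S St n hKh1 hσ hσ1 hS0 hSt0 hS2 hSt2
  have hfinal : |postVar k σ x z - postVar ktil σ x z| ≤
      η * (1 + 4 * Kh ^ 2 * (n : ℝ) ^ 2 / σ ^ 4) := by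
    calc |postVar k σ x z - postVar ktil σ x z| ≤ η * (1 + S + St + St * S) := hvdiff
      _ ≤ η * (1 + 4 * Kh ^ 2 * (n : ℝ) ^ 2 / σ ^ 4) :=
          mul_le_mul_of_nonneg_left harith hη0
  calc |Real.sqrt (postVar k σ x z) - Real.sqrt (postVar ktil σ x z)|
      ≤ Real.sqrt |postVar k σ x z - postVar ktil σ x z| := aux_sqrt_abs hv0 hvt0
    _ ≤ Real.sqrt (η * (1 + 4 * Kh ^ 2 * (n : ℝ) ^ 2 / σ ^ 4)) := Real.sqrt_le_sqrt hfinal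
end

section
/- Let n be a positive integer, σ ∈ (0, 1], η ∈ [0, 1], K₀ > 0, M ≥ 0, and set K̂₀ = max(1, K₀). Let K, K̃ ∈ ℝ^{n×n} be symmetric positive semidefinite matrices with |K_{ij} − K̃_{ij}| ≤ η for all i, j; let k, k̃ ∈ ℝⁿ with |k_i| ≤ K₀ and |k_i − k̃_i| ≤ η for all i; and let y ∈ ℝⁿ with ‖y‖₂ ≤ √n·M. Then |kᵀ(K + σ²I)⁻¹y − k̃ᵀ(K̃ + σ²I)⁻¹y| ≤ 2·K̂₀·n²·η·M/σ⁴. (The deterministic core of Lemma 10: the difference of the GP posterior means computed with the exact and empirical NTK is controlled by the kernel approximation error η = (L+1)ε and the norm of the observation vector.) -/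
open Matrix

/-- The Euclidean norm of a vector in `ℝⁿ`. -/
noncomputable def euclNorm {n : ℕ} (u : Fin n → ℝ) : ℝ :=
  Real.sqrt (∑ i, u i ^ 2)

lemma euclNorm_nonneg {n : ℕ} (u : Fin n → ℝ) : 0 ≤ euclNorm u := Real.sqrt_nonneg _

lemma euclNorm_sq {n : ℕ} (u : Fin n → ℝ) : euclNorm u ^ 2 = ∑ i, u i ^ 2 :=
  Real.sq_sqrt (Finset.sum_nonneg fun i _ => sq_nonneg _)

/-- Cauchy–Schwarz for the dot product. -/
lemma abs_dotProduct_le {n : ℕ} (u v : Fin n → ℝ) :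
    |u ⬝ᵥ v| ≤ euclNorm u * euclNorm v := by
  have h := Finset.sum_mul_sq_le_sq_mul_sq Finset.univ u v
  have habs : |u ⬝ᵥ v| = Real.sqrt ((u ⬝ᵥ v) ^ 2) := (Real.sqrt_sq_eq_abs _).symm
  rw [habs]
  calc Real.sqrt ((u ⬝ᵥ v) ^ 2) ≤ Real.sqrt ((∑ i, u i ^ 2) * ∑ i, v i ^ 2) :=
    Real.sqrt_le_sqrt h
  _ = euclNorm u * euclNorm v := by
    rw [Real.sqrt_mul (Finset.sum_nonneg fun i _ => sq_nonneg _)]; rfl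

/-- Entrywise bound gives Euclidean norm bound. -/
lemma euclNorm_le_of_abs_le {n : ℕ} (u : Fin n → ℝ) (c : ℝ) (hc : 0 ≤ c)
    (h : ∀ i, |u i| ≤ c) : euclNorm u ≤ Real.sqrt n * c := by
  have h1 : ∑ i, u i ^ 2 ≤ (n : ℝ) * c ^ 2 := by
    have : ∀ i ∈ Finset.univ, u i ^ 2 ≤ c ^ 2 := fun i _ => by
      rw [← sq_abs]; exact pow_le_pow_left₀ (abs_nonneg _) (h i) 2
    calc ∑ i, u i ^ 2 ≤ ∑ _i : Fin n, c ^ 2 := Finset.sum_le_sum this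
    _ = (n : ℝ) * c ^ 2 := by
      rw [Finset.sum_const, Finset.card_univ, Fintype.card_fin, nsmul_eq_mul]
  calc euclNorm u ≤ Real.sqrt ((n : ℝ) * c ^ 2) := Real.sqrt_le_sqrt h1
  _ = Real.sqrt n * c := by
    rw [Real.sqrt_mul (Nat.cast_nonneg n), Real.sqrt_sq hc]

/-- Frobenius-type bound: entrywise small matrix has small operator action. -/
lemma euclNorm_mulVec_le {n : ℕ} (B : Matrix (Fin n) (Fin n) ℝ) (η : ℝ) (hη : 0 ≤ η)
    (hB : ∀ i j, |B i j| ≤ η) (x : Fin n → ℝ) :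
    euclNorm (B *ᵥ x) ≤ (n : ℝ) * η * euclNorm x := by
  have hrow : ∀ i, (B *ᵥ x) i ^ 2 ≤ ((n : ℝ) * η ^ 2) * ∑ j, x j ^ 2 := by
    intro i
    have h := Finset.sum_mul_sq_le_sq_mul_sq Finset.univ (fun j => B i j) x
    have hBsum : ∑ j, B i j ^ 2 ≤ (n : ℝ) * η ^ 2 := by
      have : ∀ j ∈ Finset.univ, B i j ^ 2 ≤ η ^ 2 := fun j _ => by
        rw [← sq_abs]; exact pow_le_pow_left₀ (abs_nonneg _) (hB i j) 2
      calc ∑ j, B i j ^ 2 ≤ ∑ _j : Fin n, η ^ 2 := Finset.sum_le_sum this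
      _ = (n : ℝ) * η ^ 2 := by
        rw [Finset.sum_const, Finset.card_univ, Fintype.card_fin, nsmul_eq_mul]
    calc (B *ᵥ x) i ^ 2 = (∑ j, B i j * x j) ^ 2 := by rfl
    _ ≤ (∑ j, B i j ^ 2) * ∑ j, x j ^ 2 := h
    _ ≤ ((n : ℝ) * η ^ 2) * ∑ j, x j ^ 2 :=
        mul_le_mul_of_nonneg_right hBsum (Finset.sum_nonneg fun j _ => sq_nonneg _)
  have hsum : ∑ i, (B *ᵥ x) i ^ 2 ≤ ((n : ℝ) * η) ^ 2 * ∑ j, x j ^ 2 := by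
    calc ∑ i, (B *ᵥ x) i ^ 2 ≤ ∑ _i : Fin n, ((n : ℝ) * η ^ 2) * ∑ j, x j ^ 2 :=
      Finset.sum_le_sum fun i _ => hrow i
    _ = (n : ℝ) * (((n : ℝ) * η ^ 2) * ∑ j, x j ^ 2) := by
      rw [Finset.sum_const, Finset.card_univ, Fintype.card_fin, nsmul_eq_mul]
    _ = ((n : ℝ) * η) ^ 2 * ∑ j, x j ^ 2 := by ring
  calc euclNorm (B *ᵥ x) ≤ Real.sqrt (((n : ℝ) * η) ^ 2 * ∑ j, x j ^ 2) :=
    Real.sqrt_le_sqrt hsum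
  _ = ((n : ℝ) * η) * euclNorm x := by
    rw [Real.sqrt_mul (sq_nonneg _), Real.sqrt_sq (by positivity)]
    rfl

/-- Coercivity: for `A = K + σ²I` with `K` PSD, `σ²‖x‖ ≤ ‖Ax‖`. -/
lemma coercive_bound {n : ℕ} (K : Matrix (Fin n) (Fin n) ℝ) (hK : K.PosSemidef)
    (σ : ℝ) (hσ : 0 < σ) (x : Fin n → ℝ) :
    σ ^ 2 * euclNorm x ≤ euclNorm ((K + σ ^ 2 • (1 : Matrix (Fin n) (Fin n) ℝ)) *ᵥ x) := by
  set A := K + σ ^ 2 • (1 : Matrix (Fin n) (Fin n) ℝ) with hA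
  have hxx : x ⬝ᵥ x = euclNorm x ^ 2 := by
    rw [euclNorm_sq]
    simp [dotProduct, sq]
  have hAx : A *ᵥ x = K *ᵥ x + σ ^ 2 • x := by
    rw [hA, Matrix.add_mulVec, Matrix.smul_mulVec, Matrix.one_mulVec]
  have hquad : σ ^ 2 * euclNorm x ^ 2 ≤ x ⬝ᵥ (A *ᵥ x) := by
    have hpsd : 0 ≤ x ⬝ᵥ (K *ᵥ x) := by
      have := hK.dotProduct_mulVec_nonneg x
      simpa using this
    rw [hAx, dotProduct_add, dotProduct_smul, smul_eq_mul, hxx]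
    linarith
  have hcs : x ⬝ᵥ (A *ᵥ x) ≤ euclNorm x * euclNorm (A *ᵥ x) :=
    le_trans (le_abs_self _) (abs_dotProduct_le x (A *ᵥ x))
  rcases eq_or_lt_of_le (euclNorm_nonneg x) with h0 | h0
  · rw [← h0]
    simpa using euclNorm_nonneg (A *ᵥ x)
  · have : σ ^ 2 * euclNorm x ^ 2 ≤ euclNorm x * euclNorm (A *ᵥ x) := le_trans hquad hcs
    nlinarith

/-- The regularized matrix has a unit determinant. -/
lemma regularized_isUnit_det {n : ℕ} (K : Matrix (Fin n) (Fin n) ℝ) (hK : K.PosSemidef)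
    (σ : ℝ) (hσ : 0 < σ) :
    IsUnit (K + σ ^ 2 • (1 : Matrix (Fin n) (Fin n) ℝ)).det := by
  rw [isUnit_iff_ne_zero]
  intro hdet
  obtain ⟨v, hv0, hv⟩ := (Matrix.exists_mulVec_eq_zero_iff).2 hdet
  have hb := coercive_bound K hK σ hσ v
  rw [hv] at hb
  have hnv : 0 < euclNorm v := by
    obtain ⟨i, hi⟩ := Function.ne_iff.1 hv0
    apply Real.sqrt_pos.2
    have : 0 < v i ^ 2 := pow_two_pos_of_ne_zero hi
    exact lt_of_lt_of_le this (Finset.single_le_sum (fun j _ => sq_nonneg (v j))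
      (Finset.mem_univ i))
  have : euclNorm (0 : Fin n → ℝ) = 0 := by simp [euclNorm]
  rw [this] at hb
  nlinarith [mul_pos (pow_pos hσ 2) hnv]

/-- Final arithmetic estimate. -/
lemma arith_final (σ η K₀ M sn N ev eu T : ℝ)
    (hσ : 0 < σ) (hσ1 : σ ≤ 1) (hη0 : 0 ≤ η) (hM : 0 ≤ M) (hK₀ : 0 < K₀)
    (hsn : sn ^ 2 = N) (hsn1 : 1 ≤ sn)
    (hev0 : 0 ≤ ev) (heu0 : 0 ≤ eu)
    (hv2 : σ ^ 2 * ev ≤ sn * M)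
    (hchain : σ ^ 2 * eu ≤ N * η * ev)
    (hT : T ≤ sn * η * ev + sn * K₀ * eu) :
    T * σ ^ 4 ≤ 2 * max 1 K₀ * N ^ 2 * η * M := by
  have hsn0 : 0 ≤ sn := le_trans zero_le_one hsn1
  have hss : sn * sn = N := by rw [← hsn]; ring
  have hN1 : 1 ≤ N := by nlinarith
  have hN0 : 0 ≤ N := by linarith
  have hσ2le1 : σ ^ 2 ≤ 1 := by nlinarith
  have hK1 : 1 ≤ max 1 K₀ := le_max_left _ _
  have hK2 : K₀ ≤ max 1 K₀ := le_max_right _ _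
  have h1 : σ ^ 4 * ev ≤ sn * M := by
    calc σ ^ 4 * ev = σ ^ 2 * (σ ^ 2 * ev) := by ring
    _ ≤ σ ^ 2 * (sn * M) := mul_le_mul_of_nonneg_left hv2 (sq_nonneg σ)
    _ ≤ 1 * (sn * M) := mul_le_mul_of_nonneg_right hσ2le1 (mul_nonneg hsn0 hM)
    _ = sn * M := one_mul _
  have h2 : σ ^ 4 * eu ≤ N * η * (sn * M) := by
    calc σ ^ 4 * eu = σ ^ 2 * (σ ^ 2 * eu) := by ring
    _ ≤ σ ^ 2 * (N * η * ev) := mul_le_mul_of_nonneg_left hchain (sq_nonneg σ)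
    _ = N * η * (σ ^ 2 * ev) := by ring
    _ ≤ N * η * (sn * M) := mul_le_mul_of_nonneg_left hv2 (mul_nonneg hN0 hη0)
  calc T * σ ^ 4 ≤ (sn * η * ev + sn * K₀ * eu) * σ ^ 4 :=
    mul_le_mul_of_nonneg_right hT (by positivity)
  _ = sn * η * (σ ^ 4 * ev) + sn * K₀ * (σ ^ 4 * eu) := by ring
  _ ≤ sn * η * (sn * M) + sn * K₀ * (N * η * (sn * M)) :=
    add_le_add (mul_le_mul_of_nonneg_left h1 (mul_nonneg hsn0 hη0))
      (mul_le_mul_of_nonneg_left h2 (mul_nonneg hsn0 hK₀.le))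
  _ = N * η * M + K₀ * N ^ 2 * η * M := by rw [← hss]; ring
  _ ≤ max 1 K₀ * N ^ 2 * η * M + max 1 K₀ * N ^ 2 * η * M := by
    have hNN : N ≤ N ^ 2 := by nlinarith
    have hpos : 0 ≤ N ^ 2 * η * M := by positivity
    have e1 : N * η * M ≤ max 1 K₀ * N ^ 2 * η * M := by
      have a1 : N * η * M ≤ N ^ 2 * η * M := by
        have := mul_le_mul_of_nonneg_right (mul_le_mul_of_nonneg_right hNN hη0) hM
        linarith
      have a2 : N ^ 2 * η * M ≤ max 1 K₀ * (N ^ 2 * η * M) := le_mul_of_one_le_left hpos hK1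
      calc N * η * M ≤ N ^ 2 * η * M := a1
      _ ≤ max 1 K₀ * (N ^ 2 * η * M) := a2
      _ = max 1 K₀ * N ^ 2 * η * M := by ring
    have e2 : K₀ * N ^ 2 * η * M ≤ max 1 K₀ * N ^ 2 * η * M := by
      have := mul_le_mul_of_nonneg_right (mul_le_mul_of_nonneg_right
        (mul_le_mul_of_nonneg_right hK2 (sq_nonneg N)) hη0) hM
      linarith
    exact add_le_add e1 e2
  _ = 2 * max 1 K₀ * N ^ 2 * η * M := by ring

/-- Deterministic core of Lemma 10: the difference of the GP posterior means
`kᵀ(K + σ²I)⁻¹y` computed with the exact and empirical NTK is controlled by the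
entrywise kernel approximation error `η` and the norm of the observation vector. -/
theorem posterior_mean_perturbation
    (n : ℕ) (hn : 0 < n) (σ : ℝ) (hσ : 0 < σ) (hσ1 : σ ≤ 1)
    (η : ℝ) (hη0 : 0 ≤ η) (hη1 : η ≤ 1) (K₀ : ℝ) (hK₀ : 0 < K₀) (M : ℝ) (hM : 0 ≤ M)
    (K Ktil : Matrix (Fin n) (Fin n) ℝ) (hK : K.PosSemidef) (hKtil : Ktil.PosSemidef)
    (hKdiff : ∀ i j, |K i j - Ktil i j| ≤ η)
    (k ktil : Fin n → ℝ) (hk : ∀ i, |k i| ≤ K₀) (hkdiff : ∀ i, |k i - ktil i| ≤ η)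
    (y : Fin n → ℝ) (hy : euclNorm y ≤ Real.sqrt n * M) :
    |k ⬝ᵥ ((K + σ ^ 2 • (1 : Matrix (Fin n) (Fin n) ℝ))⁻¹ *ᵥ y) -
        ktil ⬝ᵥ ((Ktil + σ ^ 2 • (1 : Matrix (Fin n) (Fin n) ℝ))⁻¹ *ᵥ y)| ≤
      2 * max 1 K₀ * (n : ℝ) ^ 2 * η * M / σ ^ 4 := by
  set A := K + σ ^ 2 • (1 : Matrix (Fin n) (Fin n) ℝ) with hAdef
  set B := Ktil + σ ^ 2 • (1 : Matrix (Fin n) (Fin n) ℝ) with hBdef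
  have hAu : IsUnit A.det := regularized_isUnit_det K hK σ hσ
  have hBu : IsUnit B.det := regularized_isUnit_det Ktil hKtil σ hσ
  set v := B⁻¹ *ᵥ y with hvdef
  set w := (Ktil - K) *ᵥ v with hwdef
  set u := A⁻¹ *ᵥ w with hudef
  -- key identity
  have hBv : B *ᵥ v = y := by
    rw [hvdef, Matrix.mulVec_mulVec, Matrix.mul_nonsing_inv B hBu, Matrix.one_mulVec]
  have hident : A⁻¹ *ᵥ y - v = u := by
    have hinj : ∀ a b : Fin n → ℝ, A *ᵥ a = A *ᵥ b → a = b := by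
      intro a b hab
      have := congrArg (fun z => A⁻¹ *ᵥ z) hab
      simpa [Matrix.mulVec_mulVec, Matrix.nonsing_inv_mul A hAu, Matrix.one_mulVec] using this
    apply hinj
    have h1 : A *ᵥ (A⁻¹ *ᵥ y - v) = y - A *ᵥ v := by
      rw [Matrix.mulVec_sub, Matrix.mulVec_mulVec, Matrix.mul_nonsing_inv A hAu,
        Matrix.one_mulVec]
    have h2 : A *ᵥ u = w := by
      rw [hudef, Matrix.mulVec_mulVec, Matrix.mul_nonsing_inv A hAu, Matrix.one_mulVec]
    rw [h1, h2, hwdef, ← hBv, ← Matrix.sub_mulVec]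
    congr 1
    rw [hAdef, hBdef]
    abel
  have hsplit : k ⬝ᵥ (A⁻¹ *ᵥ y) - ktil ⬝ᵥ v = (k - ktil) ⬝ᵥ v + k ⬝ᵥ u := by
    rw [← hident, sub_dotProduct, dotProduct_sub]
    ring
  -- norms
  have hsn : Real.sqrt n ^ 2 = (n : ℝ) := Real.sq_sqrt (Nat.cast_nonneg n)
  have hsn1 : (1 : ℝ) ≤ Real.sqrt n := by
    rw [show (1 : ℝ) = Real.sqrt 1 by simp]
    exact Real.sqrt_le_sqrt (by exact_mod_cast hn)
  have hsn0 : 0 ≤ Real.sqrt n := Real.sqrt_nonneg n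
  have hv2 : σ ^ 2 * euclNorm v ≤ Real.sqrt n * M := by
    have := coercive_bound Ktil hKtil σ hσ v
    rw [← hBdef, hBv] at this
    exact le_trans this hy
  have hw2 : euclNorm w ≤ (n : ℝ) * η * euclNorm v := by
    apply euclNorm_mulVec_le _ _ hη0 _ v
    intro i j
    simpa [Matrix.sub_apply, abs_sub_comm] using hKdiff i j
  have hu2 : σ ^ 2 * euclNorm u ≤ euclNorm w := by
    have := coercive_bound K hK σ hσ u
    have hAu2 : A *ᵥ u = w := by
      rw [hudef, Matrix.mulVec_mulVec, Matrix.mul_nonsing_inv A hAu, Matrix.one_mulVec]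
    rw [← hAdef, hAu2] at this
    exact this
  have hT1 : |(k - ktil) ⬝ᵥ v| ≤ Real.sqrt n * η * euclNorm v := by
    calc |(k - ktil) ⬝ᵥ v| ≤ euclNorm (k - ktil) * euclNorm v := abs_dotProduct_le _ _
    _ ≤ (Real.sqrt n * η) * euclNorm v := by
      apply mul_le_mul_of_nonneg_right _ (euclNorm_nonneg v)
      exact euclNorm_le_of_abs_le _ η hη0 (fun i => by simpa using hkdiff i)
  have hT2 : |k ⬝ᵥ u| ≤ Real.sqrt n * K₀ * euclNorm u := by
    calc |k ⬝ᵥ u| ≤ euclNorm k * euclNorm u := abs_dotProduct_le _ _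
    _ ≤ (Real.sqrt n * K₀) * euclNorm u := by
      apply mul_le_mul_of_nonneg_right _ (euclNorm_nonneg u)
      exact euclNorm_le_of_abs_le _ K₀ hK₀.le hk
  -- final numeric estimate
  rw [hsplit, le_div_iff₀ (by positivity)]
  have hTle : |(k - ktil) ⬝ᵥ v + k ⬝ᵥ u| ≤
      Real.sqrt n * η * euclNorm v + Real.sqrt n * K₀ * euclNorm u := by
    calc |(k - ktil) ⬝ᵥ v + k ⬝ᵥ u| ≤ |(k - ktil) ⬝ᵥ v| + |k ⬝ᵥ u| := abs_add_le _ _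
    _ ≤ _ := add_le_add hT1 hT2
  exact arith_final σ η K₀ M (Real.sqrt n) ((n : ℝ)) (euclNorm v) (euclNorm u) _
    hσ hσ1 hη0 hM hK₀ hsn hsn1 (euclNorm_nonneg v) (euclNorm_nonneg u)
    hv2 (le_trans hu2 hw2) hTle
end

section
/- Let X be a set and let k, k̃ : X × X → ℝ be symmetric positive semidefinite kernels such that |k(x, x')| ≤ K₀ and |k(x, x') − k̃(x, x')| ≤ η for all x, x' ∈ X, where K₀ > 0 and η ∈ [0, 1]; set K̂₀ = max(1, K₀) and let σ ∈ (0, 1]. Let T be a positive integer, δ ∈ (0, 1), B' ≥ 0, let x₁, …, x_T ∈ X, let f : X → ℝ satisfy |f(x)| ≤ B' for all x ∈ X, and let ε₁, …, ε_T be real random variables on a probability space, each with law gaussianReal 0 σ². Set y_τ = f(x_τ) + ε_τ. For t ∈ {1, …, T} and x ∈ X, define the posterior means μ_t(x) = k_t(x)ᵀ(K_t + σ²I)⁻¹(y₁, …, y_t)ᵀ and μ̃_t(x) analogously for k̃, where K_t = (k(x_i, x_j))_{i,j≤t} and k_t(x) = (k(x, x_τ))_{τ≤t}. Then with probability at least 1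 − δ/4: for every t ∈ {1, …, T} and every x ∈ X, |μ_t(x) − μ̃_t(x)| ≤ 2·K̂₀·(t²·η/σ⁴)·(B' + σ·√(2·log(4T/δ))). (Lemma 10 of the paper, with η = (L+1)ε the approximation error between the exact and empirical NTK.) -/
open MeasureTheory ProbabilityTheory Matrix Finset

/-- The GP posterior mean at a test point `z`, given a kernel `k`, a noise level `σ`,
observed inputs `x₁, …, x_n` and an observation vector `y`:
`μ = kvecᵀ(K + σ²I)⁻¹y` where `K = (k(x_i,x_j))_{i,j}` and `kvec = (k(z,x_i))_i`. -/
noncomputable def postMean {X : Type*} (k : X → X → ℝ) (σ : ℝ) {n : ℕ}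
    (x : Fin n → X) (z : X) (y : Fin n → ℝ) : ℝ :=
  (fun i => k z (x i)) ⬝ᵥ
    (((Matrix.of fun i j => k (x i) (x j)) + σ ^ 2 • (1 : Matrix (Fin n) (Fin n) ℝ))⁻¹ *ᵥ y)

open scoped NNReal ENNReal

lemma gaussian_neg_symm (v : ℝ≥0) (hv : v ≠ 0) {s : Set ℝ} (hs : MeasurableSet s) :
    gaussianReal 0 v ((fun y : ℝ => -y) ⁻¹' s) = gaussianReal 0 v s := by
  have hmap := gaussianReal_map_const_mul (μ := 0) (v := v) (-1)
  have hv1 : (.mk ((-1:ℝ)^2) (sq_nonneg _) : ℝ≥0) = (1 : ℝ≥0) := by ext; norm_num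
  rw [mul_zero, hv1, one_mul] at hmap
  have happ := Measure.map_apply (f := fun y : ℝ => (-1) * y)
    (measurable_id.const_mul (-1)) (μ := gaussianReal 0 v) hs
  rw [hmap] at happ
  have : (fun y : ℝ => (-1) * y) ⁻¹' s = (fun y : ℝ => -y) ⁻¹' s := by
    ext y; simp
  rw [this] at happ
  exact happ.symm

lemma gaussian_half (v : ℝ≥0) (hv : v ≠ 0) :
    gaussianReal 0 v (Set.Ici 0) + gaussianReal 0 v (Set.Ici 0) = 1 := by
  set g := gaussianReal 0 v with hg
  have h0 : g {(0:ℝ)} = 0 :=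
    gaussianReal_absolutelyContinuous 0 hv (by simp)
  have hIoiIci : g (Set.Ioi 0) = g (Set.Ici 0) := by
    refine le_antisymm (measure_mono Set.Ioi_subset_Ici_self) ?_
    calc g (Set.Ici 0) = g (Set.Ioi 0 ∪ {0}) := by rw [Set.Ioi_union_left]
      _ ≤ g (Set.Ioi 0) + g {(0:ℝ)} := measure_union_le _ _
      _ = g (Set.Ioi 0) := by rw [h0, add_zero]
  have hIio : g (Set.Iio 0) = g (Set.Ioi 0) := by
    have := gaussian_neg_symm v hv (measurableSet_Ioi (a := (0:ℝ)))
    have hpre : (fun y : ℝ => -y) ⁻¹' Set.Ioi 0 = Set.Iio 0 := by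
      ext y; simp
    rw [hpre] at this
    exact this
  have hcompl : g (Set.Ici 0) + g (Set.Iio 0) = 1 := by
    have := measure_add_measure_compl (μ := g) (measurableSet_Ici (a := (0:ℝ)))
    rwa [Set.compl_Ici, measure_univ] at this
  rw [← hcompl, hIio, hIoiIci]

lemma gaussian_tail {v : ℝ≥0} (hv : v ≠ 0) {a : ℝ} (ha : 0 ≤ a) :
    gaussianReal 0 v {y : ℝ | a < |y|} ≤ ENNReal.ofReal (Real.exp (-(a ^ 2) / (2 * v))) := by
  set g := gaussianReal 0 v with hg
  set c : ℝ≥0∞ := ENNReal.ofReal (Real.exp (-(a ^ 2) / (2 * v))) with hc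
  have hvpos : (0:ℝ) < (v:ℝ) := by positivity
  -- bound on Ici a
  have hIci : g (Set.Ici a) ≤ c * gaussianReal a v (Set.Ici a) := by
    have hpt : ∀ y ∈ Set.Ici a, gaussianPDF 0 v y ≤ c * gaussianPDF a v y := by
      intro y hy
      simp only [Set.mem_Ici] at hy
      rw [gaussianPDF, gaussianPDF, hc, ← ENNReal.ofReal_mul (Real.exp_nonneg _)]
      apply ENNReal.ofReal_le_ofReal
      rw [gaussianPDFReal, gaussianPDFReal]
      rw [show Real.exp (-(a^2)/(2*v)) * ((Real.sqrt (2*Real.pi*v))⁻¹ *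
            Real.exp (-(y-a)^2/(2*(v:ℝ)))) =
          (Real.sqrt (2*Real.pi*v))⁻¹ *
            (Real.exp (-(a^2)/(2*(v:ℝ))) * Real.exp (-(y-a)^2/(2*(v:ℝ)))) by ring]
      apply mul_le_mul_of_nonneg_left _ (by positivity)
      rw [← Real.exp_add]
      apply Real.exp_le_exp.mpr
      rw [← add_div, div_le_div_iff₀ (by positivity) (by positivity)]
      nlinarith [mul_nonneg ha (sub_nonneg.mpr hy)]
    calc g (Set.Ici a) = ∫⁻ y in Set.Ici a, gaussianPDF 0 v y := gaussianReal_apply 0 hv _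
      _ ≤ ∫⁻ y in Set.Ici a, c * gaussianPDF a v y := by
          apply setLIntegral_mono (by exact (measurable_gaussianPDF a v).const_mul c) hpt
      _ = c * ∫⁻ y in Set.Ici a, gaussianPDF a v y := by
          rw [lintegral_const_mul c (measurable_gaussianPDF a v)]
      _ = c * gaussianReal a v (Set.Ici a) := by rw [gaussianReal_apply a hv]
  have hshift : gaussianReal a v (Set.Ici a) = g (Set.Ici 0) := by
    have hmap := gaussianReal_map_add_const (μ := 0) (v := v) a
    rw [zero_add] at hmap
    rw [← hmap, Measure.map_apply (measurable_add_const a) measurableSet_Ici]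
    congr 1
    ext y; simp
  have hIic : g (Set.Iic (-a)) = g (Set.Ici a) := by
    have := gaussian_neg_symm v hv (measurableSet_Ici (a := a))
    have hpre : (fun y : ℝ => -y) ⁻¹' Set.Ici a = Set.Iic (-a) := by
      ext y; simp [le_neg]
    rw [hpre] at this
    exact this
  have hsub : {y : ℝ | a < |y|} ⊆ Set.Ici a ∪ Set.Iic (-a) := by
    intro y hy
    simp only [Set.mem_setOf_eq] at hy
    rcases le_or_gt 0 y with h | h
    · left; simp only [Set.mem_Ici]; rw [abs_of_nonneg h] at hy; exact hy.le
    · right; simp only [Set.mem_Iic]; rw [abs_of_neg h] at hy; linarith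
  calc g {y : ℝ | a < |y|} ≤ g (Set.Ici a ∪ Set.Iic (-a)) := measure_mono hsub
    _ ≤ g (Set.Ici a) + g (Set.Iic (-a)) := measure_union_le _ _
    _ = g (Set.Ici a) + g (Set.Ici a) := by rw [hIic]
    _ ≤ c * g (Set.Ici 0) + c * g (Set.Ici 0) := by
        rw [← hshift]; exact add_le_add hIci hIci
    _ = c * (g (Set.Ici 0) + g (Set.Ici 0)) := by ring
    _ = c := by rw [gaussian_half v hv, mul_one]

noncomputable def enrm {n : ℕ} (v : Fin n → ℝ) : ℝ := Real.sqrt (∑ i, v i ^ 2)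

lemma enrm_nonneg {n : ℕ} (v : Fin n → ℝ) : 0 ≤ enrm v := Real.sqrt_nonneg _

lemma enrm_sq {n : ℕ} (v : Fin n → ℝ) : enrm v ^ 2 = ∑ i, v i ^ 2 :=
  Real.sq_sqrt (Finset.sum_nonneg fun _ _ => sq_nonneg _)

lemma abs_dot_le {n : ℕ} (v w : Fin n → ℝ) : |v ⬝ᵥ w| ≤ enrm v * enrm w := by
  have h : (v ⬝ᵥ w) ^ 2 ≤ (∑ i, v i ^ 2) * (∑ i, w i ^ 2) :=
    Finset.sum_mul_sq_le_sq_mul_sq Finset.univ v w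
  calc |v ⬝ᵥ w| = Real.sqrt ((v ⬝ᵥ w) ^ 2) := (Real.sqrt_sq_eq_abs _).symm
    _ ≤ Real.sqrt ((enrm v * enrm w) ^ 2) := by
        apply Real.sqrt_le_sqrt; rw [mul_pow, enrm_sq, enrm_sq]; exact h
    _ = enrm v * enrm w := Real.sqrt_sq (mul_nonneg (enrm_nonneg v) (enrm_nonneg w))

lemma enrm_le_of_bdd {n : ℕ} {v : Fin n → ℝ} {c : ℝ} (hc : 0 ≤ c) (h : ∀ i, |v i| ≤ c) :
    enrm v ≤ Real.sqrt n * c := by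
  have h1 : ∑ i, v i ^ 2 ≤ (n : ℝ) * c ^ 2 := by
    calc ∑ i, v i ^ 2 ≤ ∑ _i : Fin n, c ^ 2 := by
          refine Finset.sum_le_sum fun i _ => ?_
          have := h i; nlinarith [abs_nonneg (v i), sq_abs (v i)]
      _ = (n : ℝ) * c ^ 2 := by simp [Finset.sum_const, Finset.card_fin]
  calc enrm v ≤ Real.sqrt ((n : ℝ) * c ^ 2) := Real.sqrt_le_sqrt h1
    _ = Real.sqrt n * c := by
        rw [Real.sqrt_mul (Nat.cast_nonneg n), Real.sqrt_sq hc]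

lemma enrm_mulVec_le {n : ℕ} {M : Matrix (Fin n) (Fin n) ℝ} {c : ℝ} (hc : 0 ≤ c)
    (h : ∀ i j, |M i j| ≤ c) (v : Fin n → ℝ) :
    enrm (M *ᵥ v) ≤ n * c * enrm v := by
  have key : ∀ i, |(M *ᵥ v) i| ≤ Real.sqrt n * c * enrm v := by
    intro i
    have h1 : |(fun j => M i j) ⬝ᵥ v| ≤ enrm (fun j => M i j) * enrm v := abs_dot_le _ v
    have h2 : enrm (fun j => M i j) ≤ Real.sqrt n * c := enrm_le_of_bdd hc (h i)
    calc |(M *ᵥ v) i| = |(fun j => M i j) ⬝ᵥ v| := rfl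
      _ ≤ enrm (fun j => M i j) * enrm v := h1
      _ ≤ Real.sqrt n * c * enrm v := by
          exact mul_le_mul_of_nonneg_right h2 (enrm_nonneg v)
  have h4 : Real.sqrt n * Real.sqrt n = (n : ℝ) := Real.mul_self_sqrt (Nat.cast_nonneg n)
  calc enrm (M *ᵥ v) ≤ Real.sqrt n * (Real.sqrt n * c * enrm v) :=
        enrm_le_of_bdd (mul_nonneg (mul_nonneg (Real.sqrt_nonneg _) hc) (enrm_nonneg v)) key
    _ = Real.sqrt n * Real.sqrt n * (c * enrm v) := by ring
    _ = n * c * enrm v := by rw [h4]; ring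

lemma smul_one_posDef {n : ℕ} {σ : ℝ} (hσ : 0 < σ) :
    ((σ ^ 2 : ℝ) • (1 : Matrix (Fin n) (Fin n) ℝ)).PosDef := by
  refine ⟨?_, fun x hx => ?_⟩
  · unfold Matrix.IsHermitian; rw [Matrix.conjTranspose_smul]; simp
  · exact ((Matrix.PosDef.one (n := Fin n) (R := ℝ)).smul (by positivity : (0:ℝ) < σ ^ 2)).2 hx

lemma enrm_inv_mulVec_le {n : ℕ} {K : Matrix (Fin n) (Fin n) ℝ} (hK : K.PosSemidef)
    {σ : ℝ} (hσ : 0 < σ) (v : Fin n → ℝ) :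
    enrm ((K + σ ^ 2 • (1 : Matrix (Fin n) (Fin n) ℝ))⁻¹ *ᵥ v) ≤ enrm v / σ ^ 2 := by
  set A := K + σ ^ 2 • (1 : Matrix (Fin n) (Fin n) ℝ) with hA_def
  have hA : A.PosDef := Matrix.PosDef.posSemidef_add hK (smul_one_posDef hσ)
  have hdet : IsUnit A.det := hA.det_pos.ne'.isUnit
  set w := A⁻¹ *ᵥ v with hw_def
  have hAw : A *ᵥ w = v := by
    rw [hw_def, Matrix.mulVec_mulVec, Matrix.mul_nonsing_inv _ hdet, Matrix.one_mulVec]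
  have hq : σ ^ 2 * ∑ i, w i ^ 2 ≤ w ⬝ᵥ v := by
    have hpsd : 0 ≤ w ⬝ᵥ (K *ᵥ w) := by
      have := hK.dotProduct_mulVec_nonneg w
      simpa using this
    have hexp : w ⬝ᵥ v = w ⬝ᵥ (K *ᵥ w) + σ ^ 2 * ∑ i, w i ^ 2 := by
      rw [← hAw, hA_def, Matrix.add_mulVec, dotProduct_add, Matrix.smul_mulVec,
        Matrix.one_mulVec, dotProduct_smul]
      congr 1
      simp [dotProduct, sq, smul_eq_mul]
    linarith
  have hcs : w ⬝ᵥ v ≤ enrm w * enrm v := le_trans (le_abs_self _) (abs_dot_le w v)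
  have hsq : σ ^ 2 * enrm w ^ 2 ≤ enrm w * enrm v := by
    rw [enrm_sq]; linarith
  rcases eq_or_lt_of_le (enrm_nonneg w) with h0 | h0
  · rw [← h0]
    exact div_nonneg (enrm_nonneg v) (by positivity)
  · rw [le_div_iff₀ (by positivity)]
    nlinarith [h0]

lemma det_bound {X : Type*} (k ktil : X → X → ℝ)
    (hk : IsPSDKernel k) (hktil : IsPSDKernel ktil)
    (K₀ η : ℝ) (hK₀ : 0 < K₀) (hη0 : 0 ≤ η)
    (hbound : ∀ x x', |k x x'| ≤ K₀)
    (hdiff : ∀ x x', |k x x' - ktil x x'| ≤ η)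
    (σ : ℝ) (hσ : 0 < σ) (hσ1 : σ ≤ 1)
    {t : ℕ} (ht : 1 ≤ t) (x : Fin t → X) (z : X) (y : Fin t → ℝ)
    {Y : ℝ} (hY : 0 ≤ Y) (hy : ∀ i, |y i| ≤ Y) :
    |postMean k σ x z y - postMean ktil σ x z y| ≤
      2 * max 1 K₀ * ((t : ℝ) ^ 2 * η / σ ^ 4) * Y := by
  set Km : Matrix (Fin t) (Fin t) ℝ := Matrix.of fun i j => k (x i) (x j) with hKm
  set Km' : Matrix (Fin t) (Fin t) ℝ := Matrix.of fun i j => ktil (x i) (x j) with hKm'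
  set A := Km + σ ^ 2 • (1 : Matrix (Fin t) (Fin t) ℝ) with hA
  set A' := Km' + σ ^ 2 • (1 : Matrix (Fin t) (Fin t) ℝ) with hA'
  set kv : Fin t → ℝ := fun i => k z (x i) with hkv_def
  set kv' : Fin t → ℝ := fun i => ktil z (x i) with hkv'_def
  set u := A'⁻¹ *ᵥ y with hu_def
  have hApd : A.PosDef := Matrix.PosDef.posSemidef_add (hk.2 t x) (smul_one_posDef hσ)
  have hA'pd : A'.PosDef := Matrix.PosDef.posSemidef_add (hktil.2 t x) (smul_one_posDef hσ)
  have hdetA : IsUnit A.det := hApd.det_pos.ne'.isUnit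
  have hdetA' : IsUnit A'.det := hA'pd.det_pos.ne'.isUnit
  have hidentity : A⁻¹ *ᵥ y - A'⁻¹ *ᵥ y = A⁻¹ *ᵥ ((A' - A) *ᵥ u) := by
    have h1 : A⁻¹ * (A' - A) * A'⁻¹ = A⁻¹ - A'⁻¹ := by
      rw [Matrix.mul_sub, Matrix.sub_mul, Matrix.nonsing_inv_mul _ hdetA,
        Matrix.mul_assoc, Matrix.mul_nonsing_inv _ hdetA', Matrix.mul_one, Matrix.one_mul]
    calc A⁻¹ *ᵥ y - A'⁻¹ *ᵥ y = (A⁻¹ - A'⁻¹) *ᵥ y := (Matrix.sub_mulVec _ _ _).symm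
      _ = (A⁻¹ * (A' - A) * A'⁻¹) *ᵥ y := by rw [h1]
      _ = A⁻¹ *ᵥ ((A' - A) *ᵥ u) := by
          rw [hu_def, Matrix.mulVec_mulVec, Matrix.mulVec_mulVec, Matrix.mul_assoc]
  have hdecomp : postMean k σ x z y - postMean ktil σ x z y
      = (kv - kv') ⬝ᵥ u + kv ⬝ᵥ (A⁻¹ *ᵥ y - u) := by
    show kv ⬝ᵥ (A⁻¹ *ᵥ y) - kv' ⬝ᵥ (A'⁻¹ *ᵥ y) = _
    rw [sub_dotProduct, dotProduct_sub, ← hu_def]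
    ring
  set s := Real.sqrt t with hs_def
  have hs0 : 0 ≤ s := Real.sqrt_nonneg _
  have hst : s * s = (t : ℝ) := Real.mul_self_sqrt (Nat.cast_nonneg t)
  have hσ2 : (0:ℝ) < σ ^ 2 := by positivity
  have hσ4 : (0:ℝ) < σ ^ 4 := by positivity
  have huY : enrm u ≤ s * Y / σ ^ 2 := by
    refine le_trans (enrm_inv_mulVec_le (hktil.2 t x) hσ y) ?_
    gcongr
    exact enrm_le_of_bdd hY hy
  have hu0 : 0 ≤ enrm u := enrm_nonneg u
  have hb1 : |(kv - kv') ⬝ᵥ u| ≤ s * η * (s * Y / σ ^ 2) := by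
    calc |(kv - kv') ⬝ᵥ u| ≤ enrm (kv - kv') * enrm u := abs_dot_le _ _
      _ ≤ (s * η) * (s * Y / σ ^ 2) := by
          apply mul_le_mul _ huY hu0 (by positivity)
          exact enrm_le_of_bdd hη0 fun i => hdiff z (x i)
  have hDent : ∀ i j, |(A' - A) i j| ≤ η := by
    intro i j
    have : (A' - A) i j = ktil (x i) (x j) - k (x i) (x j) := by
      simp [hA, hA', Matrix.sub_apply, Matrix.add_apply, hKm, hKm']
    rw [this, abs_sub_comm]
    exact hdiff _ _
  have hDu : enrm ((A' - A) *ᵥ u) ≤ (t : ℝ) * η * (s * Y / σ ^ 2) := by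
    refine le_trans (enrm_mulVec_le hη0 hDent u) ?_
    gcongr
  have hb2 : |kv ⬝ᵥ (A⁻¹ *ᵥ y - u)| ≤ (s * K₀) * (((t : ℝ) * η * (s * Y / σ ^ 2)) / σ ^ 2) := by
    rw [hidentity]
    calc |kv ⬝ᵥ (A⁻¹ *ᵥ ((A' - A) *ᵥ u))|
        ≤ enrm kv * enrm (A⁻¹ *ᵥ ((A' - A) *ᵥ u)) := abs_dot_le _ _
      _ ≤ (s * K₀) * (((t : ℝ) * η * (s * Y / σ ^ 2)) / σ ^ 2) := by
          apply mul_le_mul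
          · exact enrm_le_of_bdd hK₀.le fun i => hbound z (x i)
          · refine le_trans (enrm_inv_mulVec_le (hk.2 t x) hσ _) ?_
            gcongr
          · exact enrm_nonneg _
          · positivity
  have habs : |postMean k σ x z y - postMean ktil σ x z y| ≤
      s * η * (s * Y / σ ^ 2) + (s * K₀) * (((t : ℝ) * η * (s * Y / σ ^ 2)) / σ ^ 2) := by
    rw [hdecomp]
    exact le_trans (abs_add_le _ _) (add_le_add hb1 hb2)
  have e1 : s * η * (s * Y / σ ^ 2) = (t : ℝ) * η * Y / σ ^ 2 := by
    field_simp
    linear_combination (η * Y) * hst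
  have e2 : (s * K₀) * (((t : ℝ) * η * (s * Y / σ ^ 2)) / σ ^ 2)
      = (t : ℝ) ^ 2 * K₀ * η * Y / σ ^ 4 := by
    rw [show (t:ℝ) ^ 2 = (s * s) * t by rw [hst]; ring]
    ring
  rw [e1, e2] at habs
  have hM1 : (1:ℝ) ≤ max 1 K₀ := le_max_left _ _
  have hMK : K₀ ≤ max 1 K₀ := le_max_right _ _
  have ht1 : (1:ℝ) ≤ (t : ℝ) := by exact_mod_cast ht
  have hMpos : (0:ℝ) ≤ max 1 K₀ := le_trans zero_le_one hM1
  have hσ42 : σ ^ 4 ≤ σ ^ 2 := pow_le_pow_of_le_one hσ.le hσ1 (by norm_num)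
  have ht0 : (0:ℝ) ≤ (t:ℝ) := le_trans zero_le_one ht1
  have htsq : (t:ℝ) ≤ (t:ℝ) ^ 2 := by nlinarith
  have hnum : (0:ℝ) ≤ (t:ℝ) ^ 2 * η * Y := mul_nonneg (mul_nonneg (sq_nonneg _) hη0) hY
  have step1 : (t:ℝ) * η * Y ≤ max 1 K₀ * ((t:ℝ) ^ 2 * η) * Y := by
    calc (t:ℝ) * η * Y ≤ (t:ℝ) ^ 2 * η * Y :=
          mul_le_mul_of_nonneg_right (mul_le_mul_of_nonneg_right htsq hη0) hY
      _ = 1 * ((t:ℝ) ^ 2 * η * Y) := by ring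
      _ ≤ max 1 K₀ * ((t:ℝ) ^ 2 * η * Y) := mul_le_mul_of_nonneg_right hM1 hnum
      _ = max 1 K₀ * ((t:ℝ) ^ 2 * η) * Y := by ring
  have step2 : (t:ℝ) ^ 2 * K₀ * η * Y ≤ max 1 K₀ * ((t:ℝ) ^ 2 * η) * Y := by
    calc (t:ℝ) ^ 2 * K₀ * η * Y = K₀ * ((t:ℝ) ^ 2 * η * Y) := by ring
      _ ≤ max 1 K₀ * ((t:ℝ) ^ 2 * η * Y) := mul_le_mul_of_nonneg_right hMK hnum
      _ = max 1 K₀ * ((t:ℝ) ^ 2 * η) * Y := by ring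
  have hterm1 : (t : ℝ) * η * Y / σ ^ 2 ≤ max 1 K₀ * ((t : ℝ) ^ 2 * η / σ ^ 4) * Y := by
    calc (t : ℝ) * η * Y / σ ^ 2 ≤ max 1 K₀ * ((t:ℝ) ^ 2 * η) * Y / σ ^ 2 :=
          by gcongr
      _ ≤ max 1 K₀ * ((t:ℝ) ^ 2 * η) * Y / σ ^ 4 :=
          div_le_div_of_nonneg_left (mul_nonneg (mul_nonneg hMpos
            (mul_nonneg (sq_nonneg _) hη0)) hY) hσ4 hσ42
      _ = max 1 K₀ * ((t : ℝ) ^ 2 * η / σ ^ 4) * Y := by ring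
  have hterm2 : (t : ℝ) ^ 2 * K₀ * η * Y / σ ^ 4 ≤ max 1 K₀ * ((t : ℝ) ^ 2 * η / σ ^ 4) * Y := by
    calc (t : ℝ) ^ 2 * K₀ * η * Y / σ ^ 4 ≤ max 1 K₀ * ((t:ℝ) ^ 2 * η) * Y / σ ^ 4 :=
          by gcongr
      _ = max 1 K₀ * ((t : ℝ) ^ 2 * η / σ ^ 4) * Y := by ring
  calc |postMean k σ x z y - postMean ktil σ x z y|
      ≤ (t : ℝ) * η * Y / σ ^ 2 + (t : ℝ) ^ 2 * K₀ * η * Y / σ ^ 4 := habs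
    _ ≤ max 1 K₀ * ((t : ℝ) ^ 2 * η / σ ^ 4) * Y + max 1 K₀ * ((t : ℝ) ^ 2 * η / σ ^ 4) * Y :=
        add_le_add hterm1 hterm2
    _ = 2 * max 1 K₀ * ((t : ℝ) ^ 2 * η / σ ^ 4) * Y := by ring

/-- Lemma 10 of the paper: with probability at least `1 − δ/4`, the GP posterior means
computed with the exact NTK `k` and with the empirical NTK `k̃` (which differ entrywise
by at most `η`) on the noisy observations `y_τ = f(x_τ) + ε_τ` satisfy, simultaneously
for all `t ≤ T` and all test points `z`,
`|μ_t(z) − μ̃_t(z)| ≤ 2·K̂₀·(t²η/σ⁴)·(B' + σ√(2 log(4T/δ)))`. -/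
theorem posterior_mean_perturbation_whp
    {X : Type*} (k ktil : X → X → ℝ)
    (hk : IsPSDKernel k) (hktil : IsPSDKernel ktil)
    (K₀ η : ℝ) (hK₀ : 0 < K₀) (hη0 : 0 ≤ η) (hη1 : η ≤ 1)
    (hbound : ∀ x x', |k x x'| ≤ K₀)
    (hdiff : ∀ x x', |k x x' - ktil x x'| ≤ η)
    (σ : ℝ) (hσ : 0 < σ) (hσ1 : σ ≤ 1)
    (T : ℕ) (hT : 0 < T) (δ : ℝ) (hδ : δ ∈ Set.Ioo (0 : ℝ) 1)
    (B' : ℝ) (hB' : 0 ≤ B')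
    (x : ℕ → X) (f : X → ℝ) (hf : ∀ z : X, |f z| ≤ B')
    {Ω : Type*} [MeasureSpace Ω] [IsProbabilityMeasure (ℙ : Measure Ω)]
    (ε : ℕ → Ω → ℝ)
    (hε : ∀ τ ∈ Finset.Icc 1 T,
      Measure.map (ε τ) ℙ = gaussianReal 0 ⟨σ ^ 2, sq_nonneg σ⟩) :
    1 - ENNReal.ofReal (δ / 4) ≤
      ℙ {ω : Ω | ∀ t ∈ Finset.Icc 1 T, ∀ z : X,
          |postMean k σ (fun i : Fin t => x (i.val + 1)) z
              (fun i : Fin t => f (x (i.val + 1)) + ε (i.val + 1) ω) -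
            postMean ktil σ (fun i : Fin t => x (i.val + 1)) z
              (fun i : Fin t => f (x (i.val + 1)) + ε (i.val + 1) ω)| ≤
            2 * max 1 K₀ * ((t : ℝ) ^ 2 * η / σ ^ 4) *
              (B' + σ * Real.sqrt (2 * Real.log (4 * T / δ)))} := by
  obtain ⟨hδ0, hδ1⟩ := hδ
  have hT1 : (1:ℝ) ≤ (T:ℝ) := by exact_mod_cast hT
  have hratio : (1:ℝ) < 4 * T / δ := by
    rw [lt_div_iff₀ hδ0]
    nlinarith
  set L := Real.log (4 * T / δ) with hL_def
  have hL0 : 0 ≤ L := Real.log_nonneg hratio.le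
  set a := σ * Real.sqrt (2 * L) with ha_def
  have ha0 : 0 ≤ a := mul_nonneg hσ.le (Real.sqrt_nonneg _)
  set v : ℝ≥0 := ⟨σ ^ 2, sq_nonneg σ⟩ with hv_def
  have hv : v ≠ 0 := by
    intro h
    have : σ ^ 2 = 0 := congrArg NNReal.toReal h
    nlinarith
  have hsetm : MeasurableSet {y : ℝ | a < |y|} :=
    measurableSet_lt measurable_const continuous_abs.measurable
  have htail : ∀ τ ∈ Finset.Icc 1 T, ℙ {ω | a < |ε τ ω|} ≤ ENNReal.ofReal (δ / (4 * T)) := by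
    intro τ hτ
    have hmap := hε τ hτ
    have hmeas : AEMeasurable (ε τ) ℙ := by
      by_contra h
      have h1 : (gaussianReal 0 v) Set.univ = 1 := measure_univ
      rw [← hmap, Measure.map_of_not_aemeasurable h] at h1
      simp at h1
    have heq : ℙ {ω | a < |ε τ ω|} = (gaussianReal 0 v) {y | a < |y|} := by
      rw [← hmap, Measure.map_apply_of_aemeasurable hmeas hsetm]
      rfl
    rw [heq]
    refine le_trans (gaussian_tail hv ha0) ?_
    have hexp : -(a ^ 2) / (2 * (v : ℝ)) = -L := by
      have hsq : a ^ 2 = σ ^ 2 * (2 * L) := by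
        rw [ha_def, mul_pow, Real.sq_sqrt (by positivity : (0:ℝ) ≤ 2 * L)]
      have hcv : (v : ℝ) = σ ^ 2 := rfl
      rw [hsq, hcv]
      field_simp
    rw [hexp]
    apply ENNReal.ofReal_le_ofReal
    rw [Real.exp_neg, hL_def, Real.exp_log (by linarith : (0:ℝ) < 4 * T / δ)]
    rw [inv_div]
  set E : Set Ω := {ω | ∀ τ ∈ Finset.Icc 1 T, |ε τ ω| ≤ a} with hE_def
  have hEc : ℙ Eᶜ ≤ ENNReal.ofReal (δ / 4) := by
    have hsub : Eᶜ ⊆ ⋃ τ ∈ Finset.Icc 1 T, {ω | a < |ε τ ω|} := by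
      intro ω hω
      simp only [hE_def, Set.mem_compl_iff, Set.mem_setOf_eq, not_forall] at hω
      obtain ⟨τ, hτ, h⟩ := hω
      simp only [Set.mem_iUnion]
      exact ⟨τ, hτ, not_le.mp h⟩
    calc ℙ Eᶜ ≤ ℙ (⋃ τ ∈ Finset.Icc 1 T, {ω | a < |ε τ ω|}) := measure_mono hsub
      _ ≤ ∑ τ ∈ Finset.Icc 1 T, ℙ {ω | a < |ε τ ω|} := measure_biUnion_finset_le _ _
      _ ≤ ∑ τ ∈ Finset.Icc 1 T, ENNReal.ofReal (δ / (4 * T)) := Finset.sum_le_sum htail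
      _ = (T : ℝ≥0∞) * ENNReal.ofReal (δ / (4 * T)) := by
          rw [Finset.sum_const, Nat.card_Icc]
          simp [nsmul_eq_mul]
      _ = ENNReal.ofReal (δ / 4) := by
          rw [← ENNReal.ofReal_natCast T, ← ENNReal.ofReal_mul (by positivity)]
          congr 1
          have hTne : (T:ℝ) ≠ 0 := by linarith
          field_simp
  have hsubset : E ⊆ {ω : Ω | ∀ t ∈ Finset.Icc 1 T, ∀ z : X,
      |postMean k σ (fun i : Fin t => x (i.val + 1)) z
          (fun i : Fin t => f (x (i.val + 1)) + ε (i.val + 1) ω) -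
        postMean ktil σ (fun i : Fin t => x (i.val + 1)) z
          (fun i : Fin t => f (x (i.val + 1)) + ε (i.val + 1) ω)| ≤
        2 * max 1 K₀ * ((t : ℝ) ^ 2 * η / σ ^ 4) *
          (B' + σ * Real.sqrt (2 * Real.log (4 * T / δ)))} := by
    intro ω hω t htT z
    obtain ⟨ht1, htT'⟩ := Finset.mem_Icc.mp htT
    refine det_bound k ktil hk hktil K₀ η hK₀ hη0 hbound hdiff σ hσ hσ1 ht1 _ z _
      (add_nonneg hB' ha0) ?_
    intro i
    have hi : i.val + 1 ∈ Finset.Icc 1 T := by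
      refine Finset.mem_Icc.mpr ⟨le_add_self, ?_⟩
      have : i.val + 1 ≤ t := i.isLt
      omega
    calc |f (x (i.val + 1)) + ε (i.val + 1) ω|
        ≤ |f (x (i.val + 1))| + |ε (i.val + 1) ω| := abs_add_le _ _
      _ ≤ B' + a := add_le_add (hf _) (hω _ hi)
  have h1 : (1 : ℝ≥0∞) ≤ ℙ E + ℙ Eᶜ := by
    rw [← measure_univ (μ := (ℙ : Measure Ω)), ← Set.union_compl_self E]
    exact measure_union_le _ _
  have h2 : (1 : ℝ≥0∞) ≤ ℙ E + ENNReal.ofReal (δ / 4) :=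
    le_trans h1 (add_le_add le_rfl hEc)
  calc 1 - ENNReal.ofReal (δ / 4) ≤ ℙ E := tsub_le_iff_right.mpr h2
    _ ≤ _ := measure_mono hsubset
end
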